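/- arXiv:2501.02441 — 3 statements merged into one kernel-verified Lean document; each statement's English description precedes it below -/
import Mathlib

section
/- Define S = − inf_{λ_1 > 0, λ_2 > 0} [ (λ_2/(λ_1+λ_2)) · log ∫ e^{λ_1 h} dμ_0 + (λ_1/(λ_1+λ_2)) · log sup_{β ∈ B} ∫ e^{−λ_2 h} dν_β ] ∈ [−∞, +∞]. Then limsup_{n→∞} [ inf_{γ ∈ ℝ} ( ℙ_{μ_0^{⊗n}}( ∑_{t=1}^n h(Y_t) ≥ γ ) + sup_{β_1,…,β_n ∈ B} ℙ( ∑_{t=1}^n h(Y_t) < γ ) ) ]^{1/n} ≤ e^{−S}, where in the first probability Y_1,…,Y_n are i.i.d. with law μ_0 and in the second probability Y_1,…,Y_n are independent with Y_t ∼ ν_{β_t}; that is, with a suitably chosen threshold, the sum of the worst-case type I and type II errors of the threshold test based on ∑ h(Y_t) decays at exponential rate at least S. -/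
open MeasureTheory ProbabilityTheory Filter Set ENNReal

private lemma lintegral_pi_prod_aux {n : ℕ} {E : Type*} [MeasurableSpace E]
    (μ : Fin n → Measure E) [∀ i, IsProbabilityMeasure (μ i)]
    (f : Fin n → E → ℝ≥0∞) (hf : ∀ i, Measurable (f i)) :
    ∫⁻ y, ∏ i, f i (y i) ∂Measure.pi μ = ∏ i, ∫⁻ x, f i x ∂(μ i) := by
  induction n with
  | zero => simp
  | succ n ih =>
    have hmp := measurePreserving_piFinSuccAbove μ 0
    have hG : Measurable fun z : E × (Fin n → E) =>
        f 0 z.1 * ∏ j : Fin n, f j.succ (z.2 j) :=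
      ((hf 0).comp measurable_fst).mul
        (Finset.measurable_prod _ fun j _ =>
          (hf j.succ).comp ((measurable_pi_apply j).comp measurable_snd))
    have h1 : ∫⁻ y, ∏ i, f i (y i) ∂Measure.pi μ
        = ∫⁻ z, f 0 z.1 * ∏ j : Fin n, f j.succ (z.2 j)
            ∂((μ 0).prod (Measure.pi fun j => μ (Fin.succAbove 0 j))) := by
      rw [← hmp.lintegral_comp hG]
      refine lintegral_congr fun y => ?_
      rw [Fin.prod_univ_succAbove (fun i => f i (y i)) 0]
      simp [MeasurableEquiv.piFinSuccAbove, Fin.tail]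
    rw [h1, lintegral_prod_mul (f := f 0)
        (g := fun z : Fin n → E => ∏ j : Fin n, f j.succ (z j)) (hf 0).aemeasurable
      ((Finset.measurable_prod _ fun (j : Fin n) _ =>
        (hf j.succ).comp (measurable_pi_apply j)).aemeasurable)]
    simp_rw [Fin.succAbove_zero]
    rw [ih (fun j => μ j.succ) (fun j => f j.succ) (fun j => hf j.succ),
      Fin.prod_univ_succ]

private lemma chernoff_aux {n : ℕ} {E : Type*} [MeasurableSpace E]
    (μ : Fin n → Measure E) [∀ i, IsProbabilityMeasure (μ i)]
    (g : E → ℝ) (hg : Measurable g) :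
    Measure.pi μ {y | 0 ≤ ∑ t, g (y t)}
      ≤ ∏ i, ∫⁻ x, ENNReal.ofReal (Real.exp (g x)) ∂(μ i) := by
  have hSm : MeasurableSet {y : Fin n → E | 0 ≤ ∑ t, g (y t)} :=
    measurableSet_le measurable_const
      (Finset.measurable_sum _ fun t _ => hg.comp (measurable_pi_apply t))
  rw [← lintegral_indicator_one hSm,
    ← lintegral_pi_prod_aux μ (fun _ x => ENNReal.ofReal (Real.exp (g x)))
      (fun i => by fun_prop)]
  refine lintegral_mono fun y => ?_
  have hprod : ∏ i : Fin n, ENNReal.ofReal (Real.exp (g (y i)))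
      = ENNReal.ofReal (Real.exp (∑ t, g (y t))) := by
    rw [Real.exp_sum, ENNReal.ofReal_prod_of_nonneg (fun i _ => (Real.exp_pos _).le)]
  by_cases hy : 0 ≤ ∑ t, g (y t)
  · rw [Set.indicator_of_mem (show y ∈ {y : Fin n → E | 0 ≤ ∑ t, g (y t)} from hy), hprod]
    exact ENNReal.one_le_ofReal.mpr (Real.one_le_exp hy)
  · rw [Set.indicator_of_notMem (show y ∉ {y : Fin n → E | 0 ≤ ∑ t, g (y t)} from hy)]; exact bot_le

private lemma key_aux {E : Type*} [MeasurableSpace E] (μ0 : Measure E) [IsProbabilityMeasure μ0]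
    (h : E → ℝ) (hmeas : Measurable h) {B : Type*} [Nonempty B]
    (ν : B → Measure E) [∀ β, IsProbabilityMeasure (ν β)]
    (lam₁ lam₂ : ℝ) (hl₁ : 0 < lam₁) (hl₂ : 0 < lam₂) :
    Filter.limsup (fun n : ℕ =>
        (⨅ γ : ℝ,
          (Measure.pi (fun _ : Fin n => μ0) {y | γ ≤ ∑ t, h (y t)}
            + ⨆ βs : Fin n → B,
                Measure.pi (fun t => ν (βs t)) {y | ∑ t, h (y t) < γ})) ^ ((n : ℝ)⁻¹))
      atTop
      ≤ EReal.exp (((lam₂ / (lam₁ + lam₂) : ℝ) : EReal)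
            * ENNReal.log (∫⁻ x, ENNReal.ofReal (Real.exp (lam₁ * h x)) ∂μ0)
          + ((lam₁ / (lam₁ + lam₂) : ℝ) : EReal)
            * ENNReal.log (⨆ β : B,
                ∫⁻ x, ENNReal.ofReal (Real.exp (-lam₂ * h x)) ∂(ν β))) := by
  have hs : (0:ℝ) < lam₁ + lam₂ := by linarith
  set a : ℝ := lam₂ / (lam₁ + lam₂) with ha_def
  set b : ℝ := lam₁ / (lam₁ + lam₂) with hb_def
  have ha : 0 < a := div_pos hl₂ hs
  have hb : 0 < b := div_pos hl₁ hs
  set M₁ : ℝ≥0∞ := ∫⁻ x, ENNReal.ofReal (Real.exp (lam₁ * h x)) ∂μ0 with hM₁_def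
  set M₂ : ℝ≥0∞ := ⨆ β : B, ∫⁻ x, ENNReal.ofReal (Real.exp (-lam₂ * h x)) ∂(ν β) with hM₂_def
  have hRHS : ((a : EReal) * ENNReal.log M₁ + (b : EReal) * ENNReal.log M₂)
      = ENNReal.log (M₁ ^ a * M₂ ^ b) := by
    rw [ENNReal.log_mul_add, ENNReal.log_rpow, ENNReal.log_rpow]
  rw [hRHS, ENNReal.exp_log]
  -- positivity of M₁, M₂
  have hM₁pos : 0 < M₁ := by
    rw [hM₁_def, lintegral_pos_iff_support (by fun_prop)]
    have hsupp : Function.support (fun x => ENNReal.ofReal (Real.exp (lam₁ * h x))) = Set.univ := by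
      ext x
      simp [Function.mem_support, ENNReal.ofReal_eq_zero, (Real.exp_pos _).not_ge]
    rw [hsupp]
    simp
  have hM₂pos : 0 < M₂ := by
    obtain β0 : B := Classical.arbitrary B
    refine lt_of_lt_of_le ?_ (le_iSup (fun β : B => ∫⁻ x, ENNReal.ofReal (Real.exp (-lam₂ * h x)) ∂(ν β)) β0)
    rw [lintegral_pos_iff_support (by fun_prop)]
    have hsupp : Function.support (fun x => ENNReal.ofReal (Real.exp (-lam₂ * h x))) = Set.univ := by
      ext x
      simp [Function.mem_support, ENNReal.ofReal_eq_zero, (Real.exp_pos _).not_ge]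
    rw [hsupp]
    simp
  by_cases hM₁top : M₁ = ∞
  · have : M₂ ^ b ≠ 0 := by
      rcases eq_or_ne M₂ ∞ with hh | hh
      · simp [hh, ENNReal.top_rpow_of_pos hb]
      · exact (ENNReal.rpow_pos hM₂pos hh).ne'
    rw [hM₁top, ENNReal.top_rpow_of_pos ha, ENNReal.top_mul this]
    exact le_top
  by_cases hM₂top : M₂ = ∞
  · have : M₁ ^ a ≠ 0 := (ENNReal.rpow_pos hM₁pos hM₁top).ne'
    rw [hM₂top, ENNReal.top_rpow_of_pos hb, ENNReal.mul_top this]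
    exact le_top
  -- main case
  set m₁ : ℝ := M₁.toReal with hm₁_def
  set m₂ : ℝ := M₂.toReal with hm₂_def
  have hm₁ : 0 < m₁ := ENNReal.toReal_pos hM₁pos.ne' hM₁top
  have hm₂ : 0 < m₂ := ENNReal.toReal_pos hM₂pos.ne' hM₂top
  set C : ℝ := m₁ ^ a * m₂ ^ b with hC_def
  have hC : 0 < C := mul_pos (Real.rpow_pos_of_pos hm₁ a) (Real.rpow_pos_of_pos hm₂ b)
  have hCeq : M₁ ^ a * M₂ ^ b = ENNReal.ofReal C := by
    rw [hC_def, ← ENNReal.ofReal_toReal hM₁top, ← ENNReal.ofReal_toReal hM₂top,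
      ENNReal.ofReal_rpow_of_pos hm₁, ENNReal.ofReal_rpow_of_pos hm₂,
      ← ENNReal.ofReal_mul (Real.rpow_pos_of_pos hm₁ a).le]
  rw [hCeq]
  set c : ℝ := (Real.log m₁ - Real.log m₂) / (lam₁ + lam₂) with hc_def
  have hCexp : C = Real.exp (Real.log m₁ * a + Real.log m₂ * b) := by
    rw [hC_def, Real.exp_add, ← Real.rpow_def_of_pos hm₁, ← Real.rpow_def_of_pos hm₂]
  have hC₁ : Real.exp (-(lam₁ * c)) * m₁ = C := by
    rw [hCexp, ← Real.exp_log hm₁, ← Real.exp_add]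
    congr 1
    rw [hc_def, ha_def, hb_def]
    field_simp
    rw [Real.log_exp]; ring
  have hC₂ : Real.exp (lam₂ * c) * m₂ = C := by
    rw [hCexp, ← Real.exp_log hm₂, ← Real.exp_add]
    congr 1
    rw [hc_def, ha_def, hb_def]
    field_simp
    rw [Real.log_exp]; ring
  -- single-coordinate integral computations
  have hI₁ : ∫⁻ x, ENNReal.ofReal (Real.exp (lam₁ * (h x - c))) ∂μ0 = ENNReal.ofReal C := by
    have hh : ∀ x : E, Real.exp (lam₁ * (h x - c))
        = Real.exp (-(lam₁ * c)) * Real.exp (lam₁ * h x) := by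
      intro x; rw [← Real.exp_add]; ring_nf
    simp_rw [hh, ENNReal.ofReal_mul (Real.exp_pos _).le]
    rw [lintegral_const_mul _ (by fun_prop), ← hM₁_def, ← ENNReal.ofReal_toReal hM₁top,
      ← ENNReal.ofReal_mul (Real.exp_pos _).le, ← hm₁_def, hC₁]
  have hI₂ : ∀ β : B, ∫⁻ x, ENNReal.ofReal (Real.exp (lam₂ * (c - h x))) ∂(ν β)
      ≤ ENNReal.ofReal C := by
    intro β
    have hh : ∀ x : E, Real.exp (lam₂ * (c - h x))
        = Real.exp (lam₂ * c) * Real.exp (-lam₂ * h x) := by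
      intro x; rw [← Real.exp_add]; ring_nf
    simp_rw [hh, ENNReal.ofReal_mul (Real.exp_pos _).le]
    rw [lintegral_const_mul _ (by fun_prop)]
    calc ENNReal.ofReal (Real.exp (lam₂ * c)) * ∫⁻ x, ENNReal.ofReal (Real.exp (-lam₂ * h x)) ∂(ν β)
        ≤ ENNReal.ofReal (Real.exp (lam₂ * c)) * M₂ := by
          gcongr
          exact le_iSup (fun β : B => ∫⁻ x, ENNReal.ofReal (Real.exp (-lam₂ * h x)) ∂(ν β)) β
      _ = ENNReal.ofReal C := by
          rw [← ENNReal.ofReal_toReal hM₂top, ← ENNReal.ofReal_mul (Real.exp_pos _).le,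
            ← hm₂_def, hC₂]
  -- per-n bound
  have hbound : ∀ n : ℕ,
      (⨅ γ : ℝ,
          (Measure.pi (fun _ : Fin n => μ0) {y | γ ≤ ∑ t, h (y t)}
            + ⨆ βs : Fin n → B,
                Measure.pi (fun t => ν (βs t)) {y | ∑ t, h (y t) < γ}))
        ≤ 2 * (ENNReal.ofReal C) ^ n := by
    intro n
    refine le_trans (iInf_le _ ((n : ℝ) * c)) ?_
    have hI : Measure.pi (fun _ : Fin n => μ0) {y | (n:ℝ) * c ≤ ∑ t, h (y t)}
        ≤ (ENNReal.ofReal C) ^ n := by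
      refine le_trans (measure_mono ?_)
        (le_trans (chernoff_aux (fun _ : Fin n => μ0) (fun x => lam₁ * (h x - c))
          ((hmeas.sub measurable_const).const_mul _)) ?_)
      · intro y hy
        simp only [Set.mem_setOf_eq] at hy ⊢
        have hsum : ∑ t : Fin n, lam₁ * (h (y t) - c) = lam₁ * ((∑ t, h (y t)) - n * c) := by
          rw [← Finset.mul_sum, Finset.sum_sub_distrib, Finset.sum_const, Finset.card_univ,
            Fintype.card_fin, nsmul_eq_mul]
        rw [hsum]
        exact mul_nonneg hl₁.le (by linarith)
      · simp [hI₁]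
    have hII : (⨆ βs : Fin n → B,
        Measure.pi (fun t => ν (βs t)) {y | ∑ t, h (y t) < (n:ℝ) * c})
        ≤ (ENNReal.ofReal C) ^ n := by
      refine iSup_le fun βs => ?_
      refine le_trans (measure_mono ?_)
        (le_trans (chernoff_aux (fun t : Fin n => ν (βs t)) (fun x => lam₂ * (c - h x))
          ((measurable_const.sub hmeas).const_mul _)) ?_)
      · intro y hy
        simp only [Set.mem_setOf_eq] at hy ⊢
        have hsum : ∑ t : Fin n, lam₂ * (c - h (y t)) = lam₂ * ((n:ℝ) * c - ∑ t, h (y t)) := by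
          rw [← Finset.mul_sum, Finset.sum_sub_distrib, Finset.sum_const, Finset.card_univ,
            Fintype.card_fin, nsmul_eq_mul]
        rw [hsum]
        exact mul_nonneg hl₂.le (by linarith)
      · calc ∏ i : Fin n, ∫⁻ x, ENNReal.ofReal (Real.exp (lam₂ * (c - h x))) ∂(ν (βs i))
            ≤ ∏ _i : Fin n, ENNReal.ofReal C := Finset.prod_le_prod' fun i _ => hI₂ (βs i)
          _ = (ENNReal.ofReal C) ^ n := by simp
    calc Measure.pi (fun _ : Fin n => μ0) {y | (n:ℝ) * c ≤ ∑ t, h (y t)}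
          + (⨆ βs : Fin n → B,
              Measure.pi (fun t => ν (βs t)) {y | ∑ t, h (y t) < (n:ℝ) * c})
        ≤ (ENNReal.ofReal C) ^ n + (ENNReal.ofReal C) ^ n := add_le_add hI hII
      _ = 2 * (ENNReal.ofReal C) ^ n := (two_mul _).symm
  -- limsup
  have hev : ∀ᶠ n : ℕ in atTop,
      (⨅ γ : ℝ,
          (Measure.pi (fun _ : Fin n => μ0) {y | γ ≤ ∑ t, h (y t)}
            + ⨆ βs : Fin n → B,
                Measure.pi (fun t => ν (βs t)) {y | ∑ t, h (y t) < γ})) ^ ((n : ℝ)⁻¹)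
        ≤ (2 : ℝ≥0∞) ^ ((n : ℝ)⁻¹) * ENNReal.ofReal C := by
    filter_upwards [eventually_ge_atTop 1] with n hn
    refine le_trans (ENNReal.rpow_le_rpow (hbound n) (by positivity)) ?_
    rw [ENNReal.mul_rpow_of_nonneg _ _ (by positivity)]
    gcongr
    rw [← ENNReal.rpow_natCast (ENNReal.ofReal C) n, ← ENNReal.rpow_mul,
      mul_inv_cancel₀ (Nat.cast_ne_zero.mpr (by omega) : (n:ℝ) ≠ 0), ENNReal.rpow_one]
  have htend : Tendsto (fun n : ℕ => (2 : ℝ≥0∞) ^ ((n : ℝ)⁻¹) * ENNReal.ofReal C) atTop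
      (nhds (ENNReal.ofReal C)) := by
    have h0 : Tendsto (fun n : ℕ => ((n : ℝ))⁻¹) atTop (nhds 0) :=
      tendsto_inv_atTop_nhds_zero_nat
    have h2r : Tendsto (fun n : ℕ => (2:ℝ) ^ ((n:ℝ)⁻¹)) atTop (nhds 1) := by
      have := (Real.continuous_exp.tendsto (Real.log 2 * 0)).comp (h0.const_mul (Real.log 2))
      simp only [Function.comp_def, mul_zero, Real.exp_zero] at this
      refine this.congr fun n => ?_
      rw [Real.rpow_def_of_pos two_pos]
    have h2 : Tendsto (fun n : ℕ => (2 : ℝ≥0∞) ^ ((n : ℝ)⁻¹)) atTop (nhds 1) := by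
      have hconv : ∀ n : ℕ, (2 : ℝ≥0∞) ^ ((n : ℝ)⁻¹) = ENNReal.ofReal ((2:ℝ) ^ ((n:ℝ)⁻¹)) := by
        intro n
        rw [← ENNReal.ofReal_rpow_of_pos two_pos]
        norm_num
      simp_rw [hconv]
      have := (ENNReal.continuous_ofReal.tendsto 1).comp h2r
      simpa [Function.comp_def] using this
    have := ENNReal.Tendsto.mul_const (b := ENNReal.ofReal C) h2 (Or.inl one_ne_zero)
    simpa using this
  exact le_trans (limsup_le_limsup hev) (le_of_eq htend.limsup_eq)

/-- Let `μ0` be the null law of the pivotal statistic, `h` a score with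
`∫|h| dμ0 < ∞`, and `{ν β}` the family of alternative laws. Define
`S = − inf_{λ₁,λ₂ > 0} [ (λ₂/(λ₁+λ₂)) log ∫ e^{λ₁ h} dμ0
  + (λ₁/(λ₁+λ₂)) log sup_β ∫ e^{−λ₂ h} dν_β ] ∈ [−∞,+∞]` (conventions `log(+∞) = +∞`,
`e^{−∞} = 0`). Then
`limsup_n [ inf_γ ( ℙ_{μ0^{⊗n}}(∑ h(Y_t) ≥ γ) + sup_{β_1,…,β_n} ℙ(∑ h(Y_t) < γ) ) ]^{1/n}
  ≤ e^{−S}`: with a suitably chosen threshold, the sum of the worst-case type I and type II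
errors of the threshold test based on `∑ h(Y_t)` decays at exponential rate at least `S`. -/
theorem stmt_14
    {E : Type*} [MeasurableSpace E]
    (μ0 : Measure E) [IsProbabilityMeasure μ0]
    (h : E → ℝ) (hmeas : Measurable h) (hint : Integrable h μ0)
    {B : Type*} [Nonempty B]
    (ν : B → Measure E) [∀ β, IsProbabilityMeasure (ν β)]
    (S : EReal)
    (hS : S = -(⨅ l₁ : {l : ℝ // 0 < l}, ⨅ l₂ : {l : ℝ // 0 < l},
      ((l₂.1 / (l₁.1 + l₂.1) : ℝ) : EReal)
          * ENNReal.log (∫⁻ x, ENNReal.ofReal (Real.exp (l₁.1 * h x)) ∂μ0)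
        + ((l₁.1 / (l₁.1 + l₂.1) : ℝ) : EReal)
          * ENNReal.log (⨆ β : B,
              ∫⁻ x, ENNReal.ofReal (Real.exp (-l₂.1 * h x)) ∂(ν β)))) :
    Filter.limsup (fun n : ℕ =>
        (⨅ γ : ℝ,
          (Measure.pi (fun _ : Fin n => μ0) {y | γ ≤ ∑ t, h (y t)}
            + ⨆ βs : Fin n → B,
                Measure.pi (fun t => ν (βs t)) {y | ∑ t, h (y t) < γ})) ^ ((n : ℝ)⁻¹))
      atTop
      ≤ EReal.exp (-S) := by
  rw [hS, neg_neg]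
  refine le_trans
    (le_iInf fun l₁ : {l : ℝ // 0 < l} => le_iInf fun l₂ : {l : ℝ // 0 < l} =>
      key_aux μ0 h hmeas ν l₁.1 l₂.1 l₁.2 l₂.2)
    (le_of_eq ?_)
  calc (⨅ l₁ : {l : ℝ // 0 < l}, ⨅ l₂ : {l : ℝ // 0 < l},
        EReal.exp (((l₂.1 / (l₁.1 + l₂.1) : ℝ) : EReal)
          * ENNReal.log (∫⁻ x, ENNReal.ofReal (Real.exp (l₁.1 * h x)) ∂μ0)
        + ((l₁.1 / (l₁.1 + l₂.1) : ℝ) : EReal)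
          * ENNReal.log (⨆ β : B,
              ∫⁻ x, ENNReal.ofReal (Real.exp (-l₂.1 * h x)) ∂(ν β))))
      = ⨅ l₁ : {l : ℝ // 0 < l}, EReal.expOrderIso (⨅ l₂ : {l : ℝ // 0 < l},
          (((l₂.1 / (l₁.1 + l₂.1) : ℝ) : EReal)
          * ENNReal.log (∫⁻ x, ENNReal.ofReal (Real.exp (l₁.1 * h x)) ∂μ0)
        + ((l₁.1 / (l₁.1 + l₂.1) : ℝ) : EReal)
          * ENNReal.log (⨆ β : B,
              ∫⁻ x, ENNReal.ofReal (Real.exp (-l₂.1 * h x)) ∂(ν β)))) :=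
        iInf_congr fun l₁ => (EReal.expOrderIso.map_iInf _).symm
    _ = _ := (EReal.expOrderIso.map_iInf _).symm
end

section
/- Let ν be a probability measure on E and suppose that ∫ e^{λ h} dμ_0 < ∞ and ∫ e^{−λ h} dν < ∞ for every λ > 0. Define S_ν = − inf_{λ_1 > 0, λ_2 > 0} [ (λ_2/(λ_1+λ_2)) · log ∫ e^{λ_1 h} dμ_0 + (λ_1/(λ_1+λ_2)) · log ∫ e^{−λ_2 h} dν ]. Then for every b ∈ (0,1) there exists N such that for all n ≥ N, inf_{γ ∈ ℝ} [ ℙ_{μ_0^{⊗n}}( ∑_{t=1}^n h(Y_t) ≥ γ ) + ℙ_{ν^{⊗n}}( ∑_{t=1}^n h(Y_t) < γ ) ]^{1/n} ≥ b · e^{−S_ν}; that is, no choice of threshold for the test based on ∑ h(Y_t) can achieve a sum of type I and type II errors with exponential decay rate faster than S_ν. -/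
open MeasureTheory ProbabilityTheory Filter Set ENNReal


open MeasureTheory Filter Set

namespace Stmt15

lemma self_le_exp (v : ℝ) : v ≤ Real.exp v :=
  le_trans (by linarith) (Real.add_one_le_exp v)

lemma mul_exp_neg_le_one {t : ℝ} (ht : 0 ≤ t) : t * Real.exp (-t) ≤ 1 := by
  rw [Real.exp_neg]
  rw [mul_inv_le_iff₀ (Real.exp_pos t), one_mul]
  exact self_le_exp t

lemma rexp_bound0 {a c : ℝ} (l v : ℝ) (hal : a ≤ l) (hlc : l ≤ c) :
    Real.exp (l * v) ≤ Real.exp (a * v) + Real.exp (c * v) := by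
  rcases le_or_gt 0 v with hv | hv
  · have : Real.exp (l * v) ≤ Real.exp (c * v) :=
      Real.exp_le_exp.mpr (mul_le_mul_of_nonneg_right hlc hv)
    linarith [Real.exp_pos (a * v)]
  · have : Real.exp (l * v) ≤ Real.exp (a * v) :=
      Real.exp_le_exp.mpr (by nlinarith)
    linarith [Real.exp_pos (c * v)]

lemma rexp_bound1 {a c : ℝ} (ha : 0 < a) (l v : ℝ) (hal : a ≤ l) (hlc : l ≤ c) :
    |v| * Real.exp (l * v) ≤ 1 / a + Real.exp ((c + 1) * v) := by
  rcases le_or_gt 0 v with hv | hv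
  · have h1 : |v| = v := abs_of_nonneg hv
    have h2 : Real.exp (l * v) ≤ Real.exp (c * v) :=
      Real.exp_le_exp.mpr (mul_le_mul_of_nonneg_right hlc hv)
    have h3 : v * Real.exp (l * v) ≤ Real.exp v * Real.exp (c * v) := by
      have := self_le_exp v
      nlinarith [Real.exp_pos (l*v), Real.exp_pos (c*v), Real.exp_pos v]
    rw [h1, ← Real.exp_add] at *
    have : Real.exp (v + c * v) = Real.exp ((c+1)*v) := by ring_nf
    have h4 : 0 < 1/a := by positivity
    nlinarith
  · have h1 : |v| = -v := abs_of_neg hv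
    have h2 : Real.exp (l * v) ≤ Real.exp (a * v) :=
      Real.exp_le_exp.mpr (by nlinarith)
    have h3 : (a * (-v)) * Real.exp (-(a * (-v))) ≤ 1 := mul_exp_neg_le_one (by nlinarith)
    have h4 : (-v) * Real.exp (a * v) ≤ 1/a := by
      have : -(a * (-v)) = a * v := by ring
      rw [this] at h3
      rw [le_div_iff₀ ha]; nlinarith [Real.exp_pos (a*v)]
    have h5 : (-v) * Real.exp (l*v) ≤ (-v) * Real.exp (a*v) := by
      nlinarith
    rw [h1]
    nlinarith [Real.exp_pos ((c+1)*v)]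

lemma rexp_bound2 {a c : ℝ} (ha : 0 < a) (l v : ℝ) (hal : a ≤ l) (hlc : l ≤ c) :
    v ^ 2 * Real.exp (l * v) ≤ 4 / a ^ 2 + Real.exp ((c + 2) * v) := by
  rcases le_or_gt 0 v with hv | hv
  · have h2 : Real.exp (l * v) ≤ Real.exp (c * v) :=
      Real.exp_le_exp.mpr (mul_le_mul_of_nonneg_right hlc hv)
    have h3 : v ≤ Real.exp v := self_le_exp v
    have h5 : v^2 ≤ Real.exp v * Real.exp v := by nlinarith [Real.exp_pos v]
    have h6 : v^2 * Real.exp (l*v) ≤ (Real.exp v * Real.exp v) * Real.exp (c*v) := by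
      nlinarith [Real.exp_pos (l*v), Real.exp_pos (c*v)]
    have h7 : (Real.exp v * Real.exp v) * Real.exp (c*v) = Real.exp ((c+2)*v) := by
      rw [← Real.exp_add, ← Real.exp_add]; ring_nf
    have h8 : 0 < 4/a^2 := by positivity
    nlinarith
  · have h2 : Real.exp (l * v) ≤ Real.exp (a * v) :=
      Real.exp_le_exp.mpr (by nlinarith)
    have key : v^2 * Real.exp (a*v) ≤ 4/a^2 := by
      have h3 : ((a/2) * (-v)) * Real.exp (-((a/2) * (-v))) ≤ 1 := mul_exp_neg_le_one (by nlinarith)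
      have h4 : Real.exp (a*v) = Real.exp ((a/2)*v) * Real.exp ((a/2)*v) := by
        rw [← Real.exp_add]; congr 1; ring
      have h5 : -((a/2) * (-v)) = (a/2) * v := by ring
      rw [h5] at h3
      have h6 : 0 < Real.exp ((a/2)*v) := Real.exp_pos _
      rw [h4]
      have h7 : ((a/2) * (-v) * Real.exp ((a/2)*v)) * ((a/2) * (-v) * Real.exp ((a/2)*v)) ≤ 1 := by
        nlinarith [mul_nonneg (mul_nonneg (by linarith : (0:ℝ) ≤ a/2) (by linarith : (0:ℝ) ≤ -v)) h6.le]
      have ha2 : (0:ℝ) < a^2 := by positivity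
      have h8 : a^2 * v^2 * (Real.exp ((a/2)*v) * Real.exp ((a/2)*v)) ≤ 4 := by nlinarith
      rw [le_div_iff₀ ha2]
      nlinarith
    nlinarith [Real.exp_pos ((c+2)*v), Real.exp_pos (a*v), sq_nonneg v,
      mul_le_mul_of_nonneg_left h2 (sq_nonneg v)]

end Stmt15


open MeasureTheory Filter Set

namespace Stmt15x

lemma self_le_exp (v : ℝ) : v ≤ Real.exp v :=
  le_trans (by linarith) (Real.add_one_le_exp v)

lemma mul_exp_neg_le_one {t : ℝ} (ht : 0 ≤ t) : t * Real.exp (-t) ≤ 1 := by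
  rw [Real.exp_neg]
  rw [mul_inv_le_iff₀ (Real.exp_pos t), one_mul]
  exact self_le_exp t

lemma rexp_bound3 {l : ℝ} (hl0 : 0 < l) (hl1 : l ≤ 1) (v : ℝ) :
    |l * v| * Real.exp (l * v) ≤ 2 + Real.exp (2 * v) := by
  rcases le_or_gt 0 v with hv | hv
  · have h0 : 0 ≤ l * v := by positivity
    have h1 : |l * v| = l * v := abs_of_nonneg h0
    have h2 : l * v ≤ Real.exp (l * v) := self_le_exp _
    have h3 : Real.exp (l*v) * Real.exp (l*v) = Real.exp (2*(l*v)) := by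
      rw [← Real.exp_add]; ring_nf
    have h4 : Real.exp (2*(l*v)) ≤ Real.exp (2*v) := Real.exp_le_exp.mpr (by nlinarith)
    rw [h1]
    nlinarith [Real.exp_pos (l*v)]
  · have h0 : l * v < 0 := by
      exact mul_neg_of_pos_of_neg hl0 hv
    have h1 : |l * v| = -(l*v) := abs_of_neg h0
    have h2 : (-(l*v)) * Real.exp (-(-(l*v))) ≤ 1 := mul_exp_neg_le_one (by linarith)
    rw [neg_neg] at h2
    rw [h1]
    nlinarith [Real.exp_pos (2*v)]

section Generic
variable {E : Type*} [MeasurableSpace E] (μ : Measure E) (f : E → ℝ)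

noncomputable def Mgf (l : ℝ) : ℝ := ∫ x, Real.exp (l * f x) ∂μ
noncomputable def num (l : ℝ) : ℝ := ∫ x, f x * Real.exp (l * f x) ∂μ
noncomputable def gm (l : ℝ) : ℝ := num μ f l / Mgf μ f l
noncomputable def Fm (l : ℝ) : ℝ := Real.log (Mgf μ f l) - l * gm μ f l

variable {μ f}

lemma Mgf_pos [IsProbabilityMeasure μ]
    (hexp : ∀ l : ℝ, 0 < l → Integrable (fun x => Real.exp (l * f x)) μ)
    {l : ℝ} (hl : 0 < l) : 0 < Mgf μ f l := by
  rw [Mgf]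
  rw [integral_pos_iff_support_of_nonneg (fun x => (Real.exp_pos _).le) (hexp l hl)]
  have : (Function.support fun x => Real.exp (l * f x)) = Set.univ := by
    ext x; simp [Function.support, (Real.exp_pos (l * f x)).ne']
  rw [this]
  simp

lemma integrable_f_exp [IsProbabilityMeasure μ] (hf : Measurable f)
    (hexp : ∀ l : ℝ, 0 < l → Integrable (fun x => Real.exp (l * f x)) μ)
    {l : ℝ} (hl : 0 < l) : Integrable (fun x => f x * Real.exp (l * f x)) μ := by
  refine Integrable.mono' ((integrable_const (1/l)).add (hexp (l+1) (by linarith)))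
    ((hf.mul ((hf.const_mul l).exp)).aestronglyMeasurable) (ae_of_all _ fun x => ?_)
  have h := Stmt15.rexp_bound1 hl l (f x) le_rfl le_rfl
  calc ‖f x * Real.exp (l * f x)‖ = |f x| * Real.exp (l * f x) := by
        rw [norm_mul, Real.norm_eq_abs, Real.norm_eq_abs, abs_of_pos (Real.exp_pos _)]
    _ ≤ 1/l + Real.exp ((l+1) * f x) := h

lemma integrable_sq_exp [IsProbabilityMeasure μ] (hf : Measurable f)
    (hexp : ∀ l : ℝ, 0 < l → Integrable (fun x => Real.exp (l * f x)) μ)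
    {l : ℝ} (hl : 0 < l) : Integrable (fun x => (f x)^2 * Real.exp (l * f x)) μ := by
  refine Integrable.mono' ((integrable_const (4/l^2)).add (hexp (l+2) (by linarith)))
    (((hf.pow_const 2).mul ((hf.const_mul l).exp)).aestronglyMeasurable)
    (ae_of_all _ fun x => ?_)
  have h := Stmt15.rexp_bound2 hl l (f x) le_rfl le_rfl
  calc ‖(f x)^2 * Real.exp (l * f x)‖ = (f x)^2 * Real.exp (l * f x) := by
        rw [norm_mul, Real.norm_eq_abs, Real.norm_eq_abs, abs_of_pos (Real.exp_pos _),
          abs_of_nonneg (sq_nonneg _)]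
    _ ≤ 4/l^2 + Real.exp ((l+2) * f x) := h

lemma integrable_sub_exp [IsProbabilityMeasure μ] (hf : Measurable f)
    (hexp : ∀ l : ℝ, 0 < l → Integrable (fun x => Real.exp (l * f x)) μ)
    {l : ℝ} (hl : 0 < l) (c : ℝ) :
    Integrable (fun x => (f x - c) * Real.exp (l * f x)) μ := by
  have h := (integrable_f_exp hf hexp hl).sub ((hexp l hl).const_mul c)
  refine h.congr (ae_of_all _ fun x => ?_)
  simp only [Pi.sub_apply]; ring

lemma integrable_sub_sq_exp [IsProbabilityMeasure μ] (hf : Measurable f)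
    (hexp : ∀ l : ℝ, 0 < l → Integrable (fun x => Real.exp (l * f x)) μ)
    {l : ℝ} (hl : 0 < l) (c : ℝ) :
    Integrable (fun x => (f x - c)^2 * Real.exp (l * f x)) μ := by
  have h := ((integrable_sq_exp hf hexp hl).sub
      ((integrable_f_exp hf hexp hl).const_mul (2*c))).add ((hexp l hl).const_mul (c^2))
  refine h.congr (ae_of_all _ fun x => ?_)
  simp only [Pi.sub_apply, Pi.add_apply]; ring

lemma Mgf_ne [IsProbabilityMeasure μ]
    (hexp : ∀ l : ℝ, 0 < l → Integrable (fun x => Real.exp (l * f x)) μ)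
    {l : ℝ} (hl : 0 < l) : Mgf μ f l ≠ 0 := (Mgf_pos hexp hl).ne'

lemma num_eq_gm_mul [IsProbabilityMeasure μ]
    (hexp : ∀ l : ℝ, 0 < l → Integrable (fun x => Real.exp (l * f x)) μ)
    {l : ℝ} (hl : 0 < l) : num μ f l = gm μ f l * Mgf μ f l := by
  rw [gm, div_mul_cancel₀ _ (Mgf_ne hexp hl)]

/-- integral of the tilted density is 1 -/
lemma int_rho [IsProbabilityMeasure μ]
    (hexp : ∀ l : ℝ, 0 < l → Integrable (fun x => Real.exp (l * f x)) μ)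
    {l : ℝ} (hl : 0 < l) :
    ∫ x, Real.exp (l * f x) / Mgf μ f l ∂μ = 1 := by
  rw [integral_div, div_eq_one_iff_eq (Mgf_ne hexp hl)]
  rfl

lemma int_f_rho [IsProbabilityMeasure μ]
    (hexp : ∀ l : ℝ, 0 < l → Integrable (fun x => Real.exp (l * f x)) μ)
    {l : ℝ} (hl : 0 < l) :
    ∫ x, f x * (Real.exp (l * f x) / Mgf μ f l) ∂μ = gm μ f l := by
  have : ∀ x, f x * (Real.exp (l * f x) / Mgf μ f l)
      = (f x * Real.exp (l * f x)) / Mgf μ f l := fun x => by ring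
  simp_rw [this]
  rw [integral_div]
  rfl

/-- centered first moment of the tilted density vanishes -/
lemma int_centered_rho [IsProbabilityMeasure μ] (hf : Measurable f)
    (hexp : ∀ l : ℝ, 0 < l → Integrable (fun x => Real.exp (l * f x)) μ)
    {l : ℝ} (hl : 0 < l) :
    ∫ x, (f x - gm μ f l) * (Real.exp (l * f x) / Mgf μ f l) ∂μ = 0 := by
  have expand : ∀ x, (f x - gm μ f l) * (Real.exp (l * f x) / Mgf μ f l)
      = f x * (Real.exp (l * f x) / Mgf μ f l)
        - gm μ f l * (Real.exp (l * f x) / Mgf μ f l) := fun x => by ring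
  simp_rw [expand]
  rw [integral_sub, int_f_rho hexp hl, integral_const_mul, int_rho hexp hl, mul_one, sub_self]
  · have : ∀ x, f x * (Real.exp (l * f x) / Mgf μ f l)
        = (Mgf μ f l)⁻¹ * (f x * Real.exp (l * f x)) := fun x => by ring
    simp_rw [this]
    exact (integrable_f_exp hf hexp hl).const_mul _
  · have : ∀ x, gm μ f l * (Real.exp (l * f x) / Mgf μ f l)
        = (gm μ f l / Mgf μ f l) * Real.exp (l * f x) := fun x => by ring
    simp_rw [this]
    exact (hexp l hl).const_mul _

lemma continuousAt_Mgf [IsProbabilityMeasure μ] (hf : Measurable f)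
    (hexp : ∀ l : ℝ, 0 < l → Integrable (fun x => Real.exp (l * f x)) μ)
    {l₀ : ℝ} (hl₀ : 0 < l₀) : ContinuousAt (Mgf μ f) l₀ := by
  have : Tendsto (fun l => Mgf μ f l) (nhds l₀) (nhds (Mgf μ f l₀)) := by
    refine tendsto_integral_filter_of_dominated_convergence
      (fun x => Real.exp ((l₀/2) * f x) + Real.exp ((l₀+1) * f x))
      (Eventually.of_forall fun l => ((hf.const_mul l).exp).aestronglyMeasurable)
      ?_ ((hexp _ (by linarith)).add (hexp _ (by linarith)))
      (ae_of_all _ fun x => ?_)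
    · filter_upwards [Ioo_mem_nhds (show l₀/2 < l₀ by linarith) (show l₀ < l₀+1 by linarith)]
        with l hl
      refine ae_of_all _ fun x => ?_
      rw [Real.norm_eq_abs, abs_of_pos (Real.exp_pos _)]
      exact Stmt15.rexp_bound0 l (f x) hl.1.le hl.2.le
    · exact (Real.continuous_exp.comp (continuous_id.mul continuous_const)).tendsto l₀
  exact this

lemma continuousAt_num [IsProbabilityMeasure μ] (hf : Measurable f)
    (hexp : ∀ l : ℝ, 0 < l → Integrable (fun x => Real.exp (l * f x)) μ)
    {l₀ : ℝ} (hl₀ : 0 < l₀) : ContinuousAt (num μ f) l₀ := by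
  have : Tendsto (fun l => num μ f l) (nhds l₀) (nhds (num μ f l₀)) := by
    refine tendsto_integral_filter_of_dominated_convergence
      (fun x => 1/(l₀/2) + Real.exp (((l₀+1)+1) * f x))
      (Eventually.of_forall fun l => (hf.mul ((hf.const_mul l).exp)).aestronglyMeasurable)
      ?_ ((integrable_const _).add (hexp _ (by linarith)))
      (ae_of_all _ fun x => ?_)
    · filter_upwards [Ioo_mem_nhds (show l₀/2 < l₀ by linarith) (show l₀ < l₀+1 by linarith)]
        with l hl
      refine ae_of_all _ fun x => ?_
      rw [norm_mul, Real.norm_eq_abs, Real.norm_eq_abs, abs_of_pos (Real.exp_pos _)]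
      exact Stmt15.rexp_bound1 (by linarith) l (f x) hl.1.le hl.2.le
    · exact (continuous_const.mul
        (Real.continuous_exp.comp (continuous_id.mul continuous_const))).tendsto l₀
  exact this

lemma continuousAt_gm [IsProbabilityMeasure μ] (hf : Measurable f)
    (hexp : ∀ l : ℝ, 0 < l → Integrable (fun x => Real.exp (l * f x)) μ)
    {l₀ : ℝ} (hl₀ : 0 < l₀) : ContinuousAt (gm μ f) l₀ :=
  (continuousAt_num hf hexp hl₀).div (continuousAt_Mgf hf hexp hl₀) (Mgf_ne hexp hl₀)

lemma continuousAt_Fm [IsProbabilityMeasure μ] (hf : Measurable f)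
    (hexp : ∀ l : ℝ, 0 < l → Integrable (fun x => Real.exp (l * f x)) μ)
    {l₀ : ℝ} (hl₀ : 0 < l₀) : ContinuousAt (Fm μ f) l₀ := by
  have h1 : ContinuousAt (fun l => Real.log (Mgf μ f l)) l₀ :=
    (Real.continuousAt_log (Mgf_ne hexp hl₀)).comp (continuousAt_Mgf hf hexp hl₀)
  exact h1.sub (continuousAt_id.mul (continuousAt_gm hf hexp hl₀))

lemma tendsto_Mgf_zero [IsProbabilityMeasure μ] (hf : Measurable f)
    (hexp : ∀ l : ℝ, 0 < l → Integrable (fun x => Real.exp (l * f x)) μ) :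
    Tendsto (Mgf μ f) (nhdsWithin 0 (Set.Ioi 0)) (nhds 1) := by
  have h1 : Tendsto (fun l => Mgf μ f l) (nhdsWithin 0 (Set.Ioi 0))
      (nhds (∫ _x, (1:ℝ) ∂μ)) := by
    refine tendsto_integral_filter_of_dominated_convergence
      (fun x => 1 + Real.exp (1 * f x))
      (Eventually.of_forall fun l => ((hf.const_mul l).exp).aestronglyMeasurable)
      ?_ ((integrable_const _).add (hexp _ one_pos))
      (ae_of_all _ fun x => ?_)
    · filter_upwards [Ioc_mem_nhdsGT (show (0:ℝ) < 1 by norm_num)] with l hl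
      refine ae_of_all _ fun x => ?_
      rw [Real.norm_eq_abs, abs_of_pos (Real.exp_pos _)]
      have := Stmt15.rexp_bound0 (a := 0) (c := 1) l (f x) hl.1.le hl.2
      simpa using this
    · have : Tendsto (fun l : ℝ => Real.exp (l * f x)) (nhds 0) (nhds (Real.exp (0 * f x))) :=
        (Real.continuous_exp.comp (continuous_id.mul continuous_const)).tendsto 0
      simp only [zero_mul, Real.exp_zero] at this
      exact this.mono_left nhdsWithin_le_nhds
  simpa using h1

lemma tendsto_lnum_zero [IsProbabilityMeasure μ] (hf : Measurable f)
    (hexp : ∀ l : ℝ, 0 < l → Integrable (fun x => Real.exp (l * f x)) μ) :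
    Tendsto (fun l => l * num μ f l) (nhdsWithin 0 (Set.Ioi 0)) (nhds 0) := by
  have heq : ∀ l : ℝ, l * num μ f l = ∫ x, l * f x * Real.exp (l * f x) ∂μ := by
    intro l
    rw [num, ← integral_const_mul]
    congr 1; funext x; ring
  have h1 : Tendsto (fun l => ∫ x, l * f x * Real.exp (l * f x) ∂μ)
      (nhdsWithin 0 (Set.Ioi 0)) (nhds (∫ _x, (0:ℝ) ∂μ)) := by
    refine tendsto_integral_filter_of_dominated_convergence
      (fun x => 2 + Real.exp (2 * f x))
      (Eventually.of_forall fun l =>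
        (((measurable_const.mul hf).mul ((hf.const_mul l).exp))).aestronglyMeasurable)
      ?_ ((integrable_const _).add (hexp _ two_pos))
      (ae_of_all _ fun x => ?_)
    · filter_upwards [Ioc_mem_nhdsGT (show (0:ℝ) < 1 by norm_num)] with l hl
      refine ae_of_all _ fun x => ?_
      rw [norm_mul, Real.norm_eq_abs, Real.norm_eq_abs, abs_of_pos (Real.exp_pos _)]
      exact rexp_bound3 hl.1 hl.2 (f x)
    · have hcont : Continuous (fun l : ℝ => l * f x * Real.exp (l * f x)) :=
        ((continuous_id.mul continuous_const).mul
          (Real.continuous_exp.comp (continuous_id.mul continuous_const)))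
      have := hcont.tendsto 0
      simp only [zero_mul, Real.exp_zero, mul_one] at this
      exact this.mono_left nhdsWithin_le_nhds
  rw [integral_zero] at h1
  simp_rw [heq]
  exact h1

lemma tendsto_Fm_zero [IsProbabilityMeasure μ] (hf : Measurable f)
    (hexp : ∀ l : ℝ, 0 < l → Integrable (fun x => Real.exp (l * f x)) μ) :
    Tendsto (Fm μ f) (nhdsWithin 0 (Set.Ioi 0)) (nhds 0) := by
  have h1 : Tendsto (fun l => Real.log (Mgf μ f l)) (nhdsWithin 0 (Set.Ioi 0)) (nhds 0) := by
    have := (Real.continuousAt_log one_ne_zero).tendsto.comp (tendsto_Mgf_zero hf hexp)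
    rw [Real.log_one] at this; exact this
  have h2 : Tendsto (fun l => (l * num μ f l) / Mgf μ f l) (nhdsWithin 0 (Set.Ioi 0))
      (nhds 0) := by
    have := (tendsto_lnum_zero hf hexp).div (tendsto_Mgf_zero hf hexp) one_ne_zero
    rw [div_one] at this; exact this
  have h3 := h1.sub h2
  rw [sub_zero] at h3
  refine h3.congr fun l => ?_
  rw [Fm, gm]
  ring

/-- `Fm = -KL(tilt ‖ μ) ≤ 0` -/
lemma Fm_nonpos [IsProbabilityMeasure μ] (hf : Measurable f)
    (hexp : ∀ l : ℝ, 0 < l → Integrable (fun x => Real.exp (l * f x)) μ)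
    {l : ℝ} (hl : 0 < l) : Fm μ f l ≤ 0 := by
  set M := Mgf μ f l with hM
  have hMpos : 0 < M := Mgf_pos hexp hl
  set Λ := Real.log M with hΛ
  have key : Fm μ f l = ∫ x, (Λ - l * f x) * (Real.exp (l * f x) / M) ∂μ := by
    have expand : ∀ x, (Λ - l * f x) * (Real.exp (l * f x) / M)
        = Λ * (Real.exp (l * f x) / M) - l * (f x * (Real.exp (l * f x) / M)) := fun x => by ring
    simp_rw [expand]
    rw [integral_sub, integral_const_mul, integral_const_mul, int_rho hexp hl, int_f_rho hexp hl,
      mul_one, Fm]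
    · have : ∀ x, Λ * (Real.exp (l * f x) / M) = (Λ / M) * Real.exp (l * f x) := fun x => by ring
      simp_rw [this]
      exact (hexp l hl).const_mul _
    · have : ∀ x, l * (f x * (Real.exp (l * f x) / M)) = (l / M) * (f x * Real.exp (l * f x)) :=
        fun x => by ring
      simp_rw [this]
      exact (integrable_f_exp hf hexp hl).const_mul _
  have bound : ∀ x, (Λ - l * f x) * (Real.exp (l * f x) / M) ≤ 1 - Real.exp (l * f x) / M := by
    intro x
    have hu : 0 < M * Real.exp (-(l * f x)) := by positivity
    have hlog : Real.log (M * Real.exp (-(l * f x))) = Λ - l * f x := by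
      rw [Real.log_mul hMpos.ne' (Real.exp_ne_zero _), Real.log_exp]; ring
    have h2 : Real.log (M * Real.exp (-(l * f x))) ≤ M * Real.exp (-(l * f x)) - 1 :=
      Real.log_le_sub_one_of_pos hu
    rw [hlog] at h2
    have hρ : 0 ≤ Real.exp (l * f x) / M := by positivity
    have huρ : (M * Real.exp (-(l * f x))) * (Real.exp (l * f x) / M) = 1 := by
      rw [Real.exp_neg]
      field_simp
    nlinarith [mul_le_mul_of_nonneg_right h2 hρ]
  have int1 : Integrable (fun x => (Λ - l * f x) * (Real.exp (l * f x) / M)) μ := by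
    have : ∀ x, (Λ - l * f x) * (Real.exp (l * f x) / M)
        = (Λ/M) * Real.exp (l * f x) - (l/M) * (f x * Real.exp (l * f x)) := fun x => by ring
    simp_rw [this]
    exact ((hexp l hl).const_mul _).sub ((integrable_f_exp hf hexp hl).const_mul _)
  have int2 : Integrable (fun x => 1 - Real.exp (l * f x) / M) μ := by
    refine (integrable_const 1).sub ?_
    have : ∀ x, Real.exp (l * f x) / M = M⁻¹ * Real.exp (l * f x) := fun x => by ring
    simp_rw [this]
    exact (hexp l hl).const_mul _
  have hle := integral_mono int1 int2 bound
  rw [← key] at hle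
  have : ∫ x, (1 - Real.exp (l * f x) / M) ∂μ = 0 := by
    rw [integral_sub (integrable_const 1) ?_, int_rho hexp hl]
    · simp
    · have : ∀ x, Real.exp (l * f x) / M = M⁻¹ * Real.exp (l * f x) := fun x => by ring
      simp_rw [this]
      exact (hexp l hl).const_mul _
  rw [this] at hle
  exact hle

end Generic

end Stmt15x


open MeasureTheory Filter Set

namespace Stmt15y

section Generic
variable {E : Type*} [MeasurableSpace E] {μ : Measure E} {f : E → ℝ}

lemma prod_integral [IsProbabilityMeasure μ] {n : ℕ} (φ : Fin n → E → ℝ) :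
    ∫ y : Fin n → E, ∏ i, φ i (y i) ∂(Measure.pi fun _ => μ) = ∏ i, ∫ x, φ i x ∂μ := by
  letI : MeasureSpace E := ⟨μ⟩
  haveI : SigmaFinite (volume : Measure E) := inferInstanceAs (SigmaFinite μ)
  exact MeasureTheory.integral_fintype_prod_eq_prod (ι := Fin n) φ

lemma prod_integrable [IsProbabilityMeasure μ] {n : ℕ} (φ : Fin n → E → ℝ)
    (hφ : ∀ i, Integrable (φ i) μ) :
    Integrable (fun y : Fin n → E => ∏ i, φ i (y i)) (Measure.pi fun _ => μ) := by
  letI : MeasureSpace E := ⟨μ⟩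
  haveI : SigmaFinite (volume : Measure E) := inferInstanceAs (SigmaFinite μ)
  exact MeasureTheory.Integrable.fintype_prod hφ

open Stmt15x in
set_option maxHeartbeats 1000000 in
lemma chernoff_lower [IsProbabilityMeasure μ] (hf : Measurable f)
    (hexp : ∀ l : ℝ, 0 < l → Integrable (fun x => Real.exp (l * f x)) μ)
    {l κ : ℝ} (hl : 0 < l) (hκ : 0 < κ) :
    ∃ N : ℕ, 0 < N ∧ ∀ n : ℕ, N ≤ n → ∀ c : ℝ, c ≤ gm μ f l - κ →
      ENNReal.ofReal (Real.exp (n * (Fm μ f l - l * κ)) / 2)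
        ≤ Measure.pi (fun _ : Fin n => μ) {y | n * c < ∑ t, f (y t)} := by
  set M := Mgf μ f l with hM
  have hMpos : 0 < M := Mgf_pos hexp hl
  set Λ := Real.log M with hΛ
  set g := gm μ f l with hg
  set ρ : E → ℝ := fun x => Real.exp (l * f x) / M with hρ
  have hρnn : ∀ x, 0 ≤ ρ x := fun x => by positivity
  have hρint : Integrable ρ μ := (hexp l hl).div_const M
  set V := ∫ x, (f x - g)^2 * ρ x ∂μ with hV
  have hVnn : 0 ≤ V := integral_nonneg (fun x => by positivity)
  have hsub2_int : Integrable (fun x => (f x - g)^2 * ρ x) μ := by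
    have : ∀ x, (f x - g)^2 * ρ x = M⁻¹ * ((f x - g)^2 * Real.exp (l * f x)) := fun x => by
      simp only [hρ]; ring
    simp_rw [this]
    exact (integrable_sub_sq_exp hf hexp hl g).const_mul _
  have hsub1_int : Integrable (fun x => (f x - g) * ρ x) μ := by
    have : ∀ x, (f x - g) * ρ x = M⁻¹ * ((f x - g) * Real.exp (l * f x)) := fun x => by
      simp only [hρ]; ring
    simp_rw [this]
    exact (integrable_sub_exp hf hexp hl g).const_mul _
  have hrho1 : ∫ x, ρ x ∂μ = 1 := int_rho hexp hl
  have hcent : ∫ x, (f x - g) * ρ x ∂μ = 0 := int_centered_rho hf hexp hl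
  refine ⟨Nat.ceil (2*V/κ^2) + 1, Nat.succ_pos _, fun n hn c hc => ?_⟩
  have hn0 : 0 < n := lt_of_lt_of_le (Nat.succ_pos _) hn
  have hn0R : 0 < (n:ℝ) := by exact_mod_cast hn0
  set π := Measure.pi (fun _ : Fin n => μ) with hπ
  haveI : IsProbabilityMeasure π := by
    rw [hπ]; infer_instance
  set Sn : (Fin n → E) → ℝ := fun y => ∑ t, f (y t) with hSn
  set W : (Fin n → E) → ℝ := fun y => ∏ i, ρ (y i) with hW
  have hSnmeas : Measurable Sn := Finset.measurable_sum _ (fun i _ => hf.comp (measurable_pi_apply i))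
  have hWnn : ∀ y, 0 ≤ W y := fun y => Finset.prod_nonneg (fun i _ => hρnn _)
  have hWint : Integrable W π := prod_integrable _ (fun _ => hρint)
  have hintW : ∫ y, W y ∂π = 1 := by
    rw [hW, prod_integral (fun _ => ρ)]
    simp [hrho1]
  -- the ψ functions
  set ψ : Fin n → Fin n → Fin n → E → ℝ := fun i j k x =>
    (f x - g)^((if k = i then 1 else 0) + (if k = j then 1 else 0)) * ρ x with hψ
  have hψint : ∀ i j k, Integrable (ψ i j k) μ := by
    intro i j k
    rcases eq_or_ne k i with rfl | hki <;> rcases eq_or_ne k j with h | hkj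
    · simp only [hψ, if_pos rfl, if_pos h]
      norm_num
      exact hsub2_int.congr (ae_of_all _ fun x => by ring)
    · simp only [hψ, if_pos rfl, if_neg hkj]
      norm_num
      exact hsub1_int
    · simp only [hψ, if_neg hki, if_pos h]
      norm_num
      exact hsub1_int
    · simp only [hψ, if_neg hki, if_neg hkj]
      norm_num
      exact hρint
  have hψprod : ∀ i j (y : Fin n → E),
      (f (y i) - g) * (f (y j) - g) * W y = ∏ k, ψ i j k (y k) := by
    intro i j y
    simp only [hψ, pow_add]
    rw [Finset.prod_mul_distrib, Finset.prod_mul_distrib]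
    congr 1
    congr 1
    · have : ∀ k : Fin n, (f (y k) - g)^(if k = i then 1 else 0)
          = if k = i then f (y k) - g else 1 := by
        intro k; split <;> simp
      simp_rw [this]
      simp
    · have : ∀ k : Fin n, (f (y k) - g)^(if k = j then 1 else 0)
          = if k = j then f (y k) - g else 1 := by
        intro k; split <;> simp
      simp_rw [this]
      simp
  have hTint : ∀ i j, Integrable (fun y => (f (y i) - g) * (f (y j) - g) * W y) π := by
    intro i j
    have := prod_integrable (ψ i j) (hψint i j)
    refine this.congr (ae_of_all _ fun y => ?_)
    exact (hψprod i j y).symm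
  have hTval : ∀ i j, (∫ y, (f (y i) - g) * (f (y j) - g) * W y ∂π)
      = if i = j then V else 0 := by
    intro i j
    have : (∫ y, (f (y i) - g) * (f (y j) - g) * W y ∂π) = ∏ k, ∫ x, ψ i j k x ∂μ := by
      rw [← prod_integral (ψ i j)]
      congr 1; funext y; rw [hψprod]
    rw [this]
    rcases eq_or_ne i j with rfl | hij
    · have hval : ∀ k, (∫ x, ψ i i k x ∂μ) = if k = i then V else 1 := by
        intro k
        rcases eq_or_ne k i with rfl | hki
        · rw [if_pos rfl, hV]
          simp only [hψ, if_pos rfl]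
          norm_num
        · simp only [hψ, if_neg hki, if_neg hki]
          norm_num
          exact hrho1
      simp_rw [hval]
      simp
    · rw [if_neg hij]
      refine Finset.prod_eq_zero (Finset.mem_univ i) ?_
      simp only [hψ, if_pos rfl, if_neg hij]
      norm_num
      exact hcent
  have hsum_eq : ∀ y, (Sn y - n * g)^2 * W y
      = ∑ i, ∑ j, (f (y i) - g) * (f (y j) - g) * W y := by
    intro y
    have h1 : Sn y - n * g = ∑ i, (f (y i) - g) := by
      rw [Finset.sum_sub_distrib, Finset.sum_const, Finset.card_univ, Fintype.card_fin]
      simp [nsmul_eq_mul, hSn]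
    rw [h1, sq, Finset.sum_mul_sum]
    rw [Finset.sum_mul]
    congr 1; funext i
    rw [Finset.sum_mul]
  have hsqint : Integrable (fun y => (Sn y - n * g)^2 * W y) π := by
    have : (fun y => (Sn y - n * g)^2 * W y)
        = fun y => ∑ i, ∑ j : Fin n, (f (y i) - g) * (f (y j) - g) * W y := by
      funext y; exact hsum_eq y
    rw [this]
    exact integrable_finset_sum _ (fun i _ => integrable_finset_sum _ (fun j _ => hTint i j))
  have hsecond : ∫ y, (Sn y - n * g)^2 * W y ∂π = n * V := by
    simp_rw [hsum_eq]
    rw [integral_finset_sum _ (fun i _ => integrable_finset_sum _ (fun j _ => hTint i j))]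
    have : ∀ i : Fin n, (∫ y, ∑ j, (f (y i) - g) * (f (y j) - g) * W y ∂π) = V := by
      intro i
      rw [integral_finset_sum _ (fun j _ => hTint i j)]
      simp_rw [hTval]
      simp
    simp_rw [this]
    simp [mul_comm]
  -- Chebyshev
  set B : Set (Fin n → E) := {y | n * κ ≤ |Sn y - n * g|} with hB
  have hBmeas : MeasurableSet B :=
    measurableSet_le measurable_const ((hSnmeas.sub measurable_const).abs)
  have hZint : Integrable (fun y => ((Sn y - n*g)/(n*κ))^2 * W y) π := by
    have : ∀ y, ((Sn y - n*g)/(n*κ))^2 * W y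
        = ((n*κ)^2)⁻¹ * ((Sn y - n*g)^2 * W y) := fun y => by
      rw [div_pow]; ring
    simp_rw [this]
    exact hsqint.const_mul _
  have hZval : ∫ y, ((Sn y - n*g)/(n*κ))^2 * W y ∂π = (n*V)/(n*κ)^2 := by
    have : ∀ y, ((Sn y - n*g)/(n*κ))^2 * W y
        = ((Sn y - n*g)^2 * W y) / (n*κ)^2 := fun y => by
      rw [div_pow]; ring
    simp_rw [this]
    rw [integral_div, hsecond]
  have hchept : ∫ y in B, W y ∂π ≤ (n*V)/(n*κ)^2 := by
    have step1 : ∫ y in B, W y ∂π ≤ ∫ y in B, ((Sn y - n*g)/(n*κ))^2 * W y ∂π := by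
      refine setIntegral_mono_on hWint.integrableOn hZint.integrableOn hBmeas ?_
      intro y hy
      have hyB : n * κ ≤ |Sn y - n * g| := hy
      have hnκ : 0 < (n:ℝ) * κ := by positivity
      have h1 : ((n:ℝ)*κ)^2 ≤ (Sn y - n*g)^2 := by
        rw [← sq_abs (Sn y - n*g)]
        exact pow_le_pow_left₀ hnκ.le hyB 2
      have h2 : 1 ≤ ((Sn y - n*g)/(n*κ))^2 := by
        rw [div_pow, le_div_iff₀ (by positivity)]
        linarith
      nlinarith [hWnn y]
    refine step1.trans ?_
    rw [← hZval]
    exact setIntegral_le_integral hZint (ae_of_all _ fun y => by positivity)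
  have hcheb : ∫ y in B, W y ∂π ≤ 1/2 := by
    refine hchept.trans ?_
    have hNle : 2*V/κ^2 ≤ (n:ℝ) := by
      calc 2*V/κ^2 ≤ (Nat.ceil (2*V/κ^2) : ℝ) := Nat.le_ceil _
        _ ≤ n := by exact_mod_cast Nat.le_of_succ_le hn
    rw [div_le_div_iff₀ (by positivity) (by norm_num)]
    have : (n*κ)^2 = n * (n * κ^2) := by ring
    rw [this]
    have h2V : 2 * V ≤ n * κ^2 := by
      rw [div_le_iff₀ (by positivity)] at hNle
      linarith
    nlinarith [hn0R, hVnn, sq_nonneg κ]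
  have hmass : 1/2 ≤ ∫ y in Bᶜ, W y ∂π := by
    have := integral_add_compl hBmeas hWint
    have h2 : ∫ y in B, W y ∂π + ∫ y in Bᶜ, W y ∂π = 1 := by rw [this, hintW]
    linarith
  -- identity for W
  have hWval : ∀ y, W y = Real.exp (l * Sn y - n * Λ) := by
    intro y
    rw [hW]
    simp only [hρ]
    rw [Finset.prod_div_distrib, ← Real.exp_sum, Finset.prod_const, Finset.card_univ,
      Fintype.card_fin]
    rw [Real.exp_sub]
    congr 1
    · congr 1
      rw [Finset.mul_sum]
    · rw [← Real.exp_log hMpos, ← Real.exp_nat_mul]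
  -- upper bound for W on Bᶜ
  have hup : ∫ y in Bᶜ, W y ∂π ≤ Real.exp (l * (n*(g+κ)) - n * Λ) * (π Bᶜ).toReal := by
    have : ∫ y in Bᶜ, W y ∂π ≤ ∫ _y in Bᶜ, Real.exp (l * (n*(g+κ)) - n * Λ) ∂π := by
      refine setIntegral_mono_on hWint.integrableOn
        ((integrable_const _).integrableOn) hBmeas.compl ?_
      intro y hy
      have hyB : |Sn y - n * g| < n * κ := by
        simp only [hB, mem_compl_iff, mem_setOf_eq, not_le] at hy
        exact hy
      have h1 : Sn y ≤ n*(g+κ) := by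
        have h2 := (abs_lt.mp hyB).2
        nlinarith
      rw [hWval y]
      refine Real.exp_le_exp.mpr ?_
      have h3 := mul_le_mul_of_nonneg_left h1 hl.le
      linarith
    refine this.trans ?_
    rw [setIntegral_const]
    rw [smul_eq_mul, mul_comm, measureReal_def]
  have htoReal : Real.exp (n * (Fm μ f l - l * κ)) / 2 ≤ (π Bᶜ).toReal := by
    have hC : 0 < Real.exp (l * (n*(g+κ)) - n * Λ) := Real.exp_pos _
    have h1 : 1/2 ≤ Real.exp (l * (n*(g+κ)) - n * Λ) * (π Bᶜ).toReal := le_trans hmass hup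
    have h2 : (Real.exp (l * (n*(g+κ)) - n * Λ))⁻¹ * (1/2) ≤ (π Bᶜ).toReal := by
      rw [inv_mul_le_iff₀ hC]
      linarith [h1]
    refine le_trans (le_of_eq ?_) h2
    rw [← Real.exp_neg]
    have hFm : Fm μ f l = Λ - l * g := rfl
    rw [hFm]
    rw [div_eq_mul_one_div]
    congr 2
    ring
  have hsub : Bᶜ ⊆ {y | (n:ℝ) * c < ∑ t, f (y t)} := by
    intro y hy
    have hyB : |Sn y - n * g| < n * κ := by
      simp only [hB, mem_compl_iff, mem_setOf_eq, not_le] at hy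
      exact hy
    have h1 : n * g - n * κ < Sn y := by
      have := (abs_lt.mp hyB).1
      linarith
    have h2 : (n:ℝ) * c ≤ n * (g - κ) := by
      exact mul_le_mul_of_nonneg_left hc hn0R.le
    simp only [mem_setOf_eq]
    calc (n:ℝ) * c ≤ n * (g - κ) := h2
      _ = n * g - n * κ := by ring
      _ < Sn y := h1
  exact le_trans (ENNReal.ofReal_le_of_le_toReal htoReal) (measure_mono hsub)

end Generic

end Stmt15y


open MeasureTheory Filter Set Topology

namespace Stmt15z
open Stmt15x

section Generic
variable {E : Type*} [MeasurableSpace E] {μ : Measure E} {f : E → ℝ}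

lemma exists_gm_gt [IsProbabilityMeasure μ] (hf : Measurable f)
    (hexp : ∀ l : ℝ, 0 < l → Integrable (fun x => Real.exp (l * f x)) μ)
    (t : ℝ) {ε : ℝ} (hε : 0 < ε) (hpos : μ {x | t ≤ f x} ≠ 0) :
    ∃ l : ℝ, 0 < l ∧ t - ε < gm μ f l := by
  set s : Set E := {x | t ≤ f x} with hs
  have hsmeas : MeasurableSet s := measurableSet_le measurable_const hf
  set p : ℝ := (μ s).toReal with hp
  have hppos : 0 < p := by
    rw [hp]
    refine ENNReal.toReal_pos hpos (measure_ne_top _ _)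
  set l : ℝ := max 1 (2/(ε^2*p)) with hldef
  have hl1 : (1:ℝ) ≤ l := le_max_left _ _
  have hl : 0 < l := lt_of_lt_of_le one_pos hl1
  have hl2 : 2/(ε^2*p) ≤ l := le_max_right _ _
  refine ⟨l, hl, ?_⟩
  -- pointwise lower bound
  have hpoint : ∀ x, (Set.indicator s (fun _ => ε * Real.exp (l*t)) x)
      - (1/l) * Real.exp (l*(t-ε)) ≤ (f x - (t-ε)) * Real.exp (l * f x) := by
    intro x
    rcases le_or_gt t (f x) with hx | hx
    · rw [Set.indicator_of_mem (by exact hx : x ∈ s)]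
      have h1 : Real.exp (l * t) ≤ Real.exp (l * f x) :=
        Real.exp_le_exp.mpr (mul_le_mul_of_nonneg_left hx hl.le)
      have h2 : ε ≤ f x - (t - ε) := by linarith
      have h3 : ε * Real.exp (l*t) ≤ (f x - (t-ε)) * Real.exp (l * f x) := by
        nlinarith [Real.exp_pos (l*t), Real.exp_pos (l*f x)]
      have h4 : 0 < (1/l) * Real.exp (l*(t-ε)) := by positivity
      linarith
    · rw [Set.indicator_of_notMem (by simpa [hs] using not_le.mpr hx)]
      rcases le_or_gt (t - ε) (f x) with hx2 | hx2
      · have h1 : 0 ≤ (f x - (t-ε)) * Real.exp (l * f x) := by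
          have : 0 ≤ f x - (t-ε) := by linarith
          positivity
        have h4 : 0 < (1/l) * Real.exp (l*(t-ε)) := by positivity
        linarith
      · -- f x < t - ε
        have hu : 0 < (t - ε) - f x := by linarith
        have hkey : ((t-ε) - f x) * Real.exp (l * f x) ≤ (1/l) * Real.exp (l*(t-ε)) := by
          have h5 : (l * ((t-ε) - f x)) * Real.exp (-(l * ((t-ε) - f x))) ≤ 1 :=
            Stmt15x.mul_exp_neg_le_one (by nlinarith)
          have h6 : Real.exp (l * f x) = Real.exp (l*(t-ε)) * Real.exp (-(l*((t-ε) - f x))) := by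
            rw [← Real.exp_add]; congr 1; ring
          rw [h6]
          rw [div_mul_eq_mul_div, le_div_iff₀ hl]
          nlinarith [Real.exp_pos (l*(t-ε)), Real.exp_pos (-(l*((t-ε)-f x)))]
        nlinarith
  -- integrate
  have hint1 : Integrable (fun x => (f x - (t-ε)) * Real.exp (l * f x)) μ :=
    integrable_sub_exp hf hexp hl _
  have hint2 : Integrable (fun x =>
      (Set.indicator s (fun _ => ε * Real.exp (l*t)) x) - (1/l) * Real.exp (l*(t-ε))) μ := by
    refine Integrable.sub ?_ (integrable_const _)
    exact (integrable_const _).indicator hsmeas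
  have hmono := integral_mono hint2 hint1 hpoint
  have hlhs : ∫ x, ((Set.indicator s (fun _ => ε * Real.exp (l*t)) x)
      - (1/l) * Real.exp (l*(t-ε))) ∂μ
      = ε * Real.exp (l*t) * p - (1/l) * Real.exp (l*(t-ε)) := by
    rw [integral_sub ((integrable_const _).indicator hsmeas) (integrable_const _)]
    rw [integral_indicator_const _ hsmeas]
    simp [hp, smul_eq_mul, mul_comm, measureReal_def]
  have hRpos : 0 < ε * Real.exp (l*t) * p - (1/l) * Real.exp (l*(t-ε)) := by
    have hsplit : Real.exp (l*t) = Real.exp (l*(t-ε)) * Real.exp (l*ε) := by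
      rw [← Real.exp_add]; congr 1; ring
    have hee : l * ε ≤ Real.exp (l * ε) := self_le_exp _
    have hEpos : 0 < Real.exp (l*(t-ε)) := Real.exp_pos _
    rw [hsplit]
    rw [sub_pos, div_mul_eq_mul_div, div_lt_iff₀ hl]
    -- goal : 1 * exp (l*(t-ε)) < ε * (exp(l*(t-ε)) * exp(l*ε)) * p * l
    have hstep : 2 ≤ ε * Real.exp (l*ε) * p * l := by
      have h7 : ε * (l*ε) * p * l ≤ ε * Real.exp (l*ε) * p * l := by
        have h7a := mul_le_mul_of_nonneg_left hee (show (0:ℝ) ≤ ε*p*l by positivity)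
        nlinarith [h7a]
      have h8 : 2 ≤ ε * (l*ε) * p * l := by
        have h9 : 2/(ε^2*p) * (ε^2 * p) ≤ l * (ε^2*p) :=
          mul_le_mul_of_nonneg_right hl2 (by positivity)
        rw [div_mul_cancel₀ _ (by positivity)] at h9
        calc (2:ℝ) ≤ l * (ε^2*p) := h9
          _ ≤ ε * (l*ε) * p * l := by nlinarith
      linarith
    nlinarith
  have hpos2 : 0 < ∫ x, (f x - (t-ε)) * Real.exp (l * f x) ∂μ := by
    rw [hlhs] at hmono
    linarith
  -- conclude about gm
  have hsplit2 : ∫ x, (f x - (t-ε)) * Real.exp (l * f x) ∂μ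
      = num μ f l - (t-ε) * Mgf μ f l := by
    have : ∀ x, (f x - (t-ε)) * Real.exp (l * f x)
        = f x * Real.exp (l * f x) - (t-ε) * Real.exp (l * f x) := fun x => by ring
    simp_rw [this]
    rw [integral_sub (integrable_f_exp hf hexp hl) ((hexp l hl).const_mul _),
      integral_const_mul]
    rfl
  rw [hsplit2] at hpos2
  have hMpos : 0 < Mgf μ f l := Mgf_pos hexp hl
  rw [gm, lt_div_iff₀ hMpos]
  linarith

lemma ae_le_of_gm_le [IsProbabilityMeasure μ] (hf : Measurable f)
    (hexp : ∀ l : ℝ, 0 < l → Integrable (fun x => Real.exp (l * f x)) μ)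
    {c : ℝ} (hc : ∀ l : ℝ, 0 < l → gm μ f l ≤ c) :
    ∀ᵐ x ∂μ, f x ≤ c := by
  rw [ae_iff]
  have hset : {x | ¬ f x ≤ c} = ⋃ k : ℕ, {x | c + 1/(k+1) ≤ f x} := by
    ext x
    simp only [mem_setOf_eq, not_le, mem_iUnion]
    constructor
    · intro hx
      obtain ⟨k, hk⟩ := exists_nat_one_div_lt (show 0 < f x - c by linarith)
      exact ⟨k, by push_cast; linarith [hk]⟩
    · intro ⟨k, hk⟩
      have : 0 < 1/((k:ℝ)+1) := by positivity
      linarith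
  rw [hset, measure_iUnion_null_iff]
  intro k
  by_contra hne
  obtain ⟨l, hl, hgt⟩ := exists_gm_gt hf hexp (c + 1/((k:ℝ)+1))
    (show 0 < 1/((k:ℝ)+1) by positivity) hne
  have := hc l hl
  simp only [add_sub_cancel_right] at hgt
  linarith

lemma Mgf_le_of_ae_le [IsProbabilityMeasure μ]
    (hexp : ∀ l : ℝ, 0 < l → Integrable (fun x => Real.exp (l * f x)) μ)
    {c : ℝ} (hae : ∀ᵐ x ∂μ, f x ≤ c) {l : ℝ} (hl : 0 < l) :
    Mgf μ f l ≤ Real.exp (l * c) := by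
  have : Mgf μ f l ≤ ∫ _x, Real.exp (l * c) ∂μ := by
    refine integral_mono_ae (hexp l hl) (integrable_const _) ?_
    filter_upwards [hae] with x hx
    exact Real.exp_le_exp.mpr (mul_le_mul_of_nonneg_left hx hl.le)
  simpa using this

lemma tendsto_shift_atTop [IsProbabilityMeasure μ] (hf : Measurable f)
    {c : ℝ} (hae : ∀ᵐ x ∂μ, f x ≤ c) :
    Tendsto (fun l => ∫ x, Real.exp (l * (f x - c)) ∂μ) atTop
      (𝓝 ((μ {x | c ≤ f x}).toReal)) := by
  have hsmeas : MeasurableSet {x | c ≤ f x} := measurableSet_le measurable_const hf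
  have htarget : (μ {x | c ≤ f x}).toReal
      = ∫ x, Set.indicator {x | c ≤ f x} (fun _ => (1:ℝ)) x ∂μ := by
    rw [integral_indicator_const _ hsmeas]
    simp [measureReal_def]
  rw [htarget]
  refine tendsto_integral_filter_of_dominated_convergence (fun _ => (1:ℝ))
    (Eventually.of_forall fun l => ((hf.sub_const c).const_mul l).exp.aestronglyMeasurable)
    ?_ (integrable_const _) ?_
  · filter_upwards [Ici_mem_atTop (0:ℝ)] with l hl
    filter_upwards [hae] with x hx
    rw [Real.norm_eq_abs, abs_of_pos (Real.exp_pos _)]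
    rw [show (1:ℝ) = Real.exp 0 by simp]
    exact Real.exp_le_exp.mpr (by nlinarith [mem_Ici.mp hl])
  · filter_upwards [hae] with x hx
    rcases eq_or_lt_of_le hx with heq | hlt
    · have hmem : x ∈ {x | c ≤ f x} := by simp [mem_setOf_eq, heq.ge]
      rw [Set.indicator_of_mem hmem]
      have : ∀ l : ℝ, Real.exp (l * (f x - c)) = 1 := by
        intro l; rw [heq]; simp
      simp_rw [this]
      exact tendsto_const_nhds
    · have hmem : x ∉ {x | c ≤ f x} := by simp [mem_setOf_eq, not_le, hlt]
      rw [Set.indicator_of_notMem hmem]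
      have h1 : Tendsto (fun l : ℝ => l * (f x - c)) atTop atBot :=
        Tendsto.atTop_mul_const_of_neg (by linarith) tendsto_id
      exact Real.tendsto_exp_atBot.comp h1

lemma shift_eq [IsProbabilityMeasure μ] (l c : ℝ) :
    ∫ x, Real.exp (l * (f x - c)) ∂μ = Mgf μ f l * Real.exp (-(l * c)) := by
  have : ∀ x, Real.exp (l * (f x - c)) = Real.exp (l * f x) * Real.exp (-(l*c)) := by
    intro x
    rw [← Real.exp_add]; congr 1; ring
  simp_rw [this]
  rw [integral_mul_const]
  rfl

end Generic

end Stmt15z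


open MeasureTheory Filter Set Topology

namespace Stmt15w

lemma ratio_exists {u p₀ : ℝ} (hu : 0 < u) (h0 : 0 < p₀) (h1 : p₀ < 1) :
    ∃ v : ℝ, 0 < v ∧ v / (u + v) = p₀ := by
  have h1' : 0 < 1 - p₀ := by linarith
  refine ⟨u * p₀ / (1 - p₀), by positivity, ?_⟩
  have hvpos : 0 < u * p₀ / (1 - p₀) := by positivity
  rw [div_eq_iff (by positivity : u + u * p₀ / (1 - p₀) ≠ 0)]
  field_simp
  ring

lemma p0_facts {mr A : ℝ} (hmr : mr ≤ 0) (hA : A < mr) :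
    0 < (mr / A + 1) / 2 ∧ (mr / A + 1) / 2 < 1 ∧ ((mr / A + 1) / 2) * A < mr := by
  have hAneg : A < 0 := lt_of_lt_of_le hA hmr
  have h0 : 0 ≤ mr / A := by
    rw [div_nonneg_iff]
    exact Or.inr ⟨hmr, hAneg.le⟩
  have h1 : mr / A < 1 := by
    have : mr / A - 1 = (mr - A) / A := by rw [sub_div, div_self hAneg.ne]
    have h2 : (mr - A) / A < 0 := div_neg_of_pos_of_neg (by linarith) hAneg
    linarith [this ▸ h2]
  refine ⟨by linarith, by linarith, ?_⟩
  have hgt : mr / A < (mr / A + 1) / 2 := by linarith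
  have := mul_lt_mul_of_neg_right hgt hAneg
  rw [div_mul_cancel₀ _ hAneg.ne] at this
  linarith

lemma key_dichotomy (g₀ F₀ g₁ F₁ : ℝ → ℝ) (mr ε : ℝ) (hε : 0 < ε) (hmr0 : mr ≤ 0)
    (hcF₀ : ∀ l : ℝ, 0 < l → ContinuousAt F₀ l) (hcF₁ : ∀ l : ℝ, 0 < l → ContinuousAt F₁ l)
    (hcg₀ : ∀ l : ℝ, 0 < l → ContinuousAt g₀ l) (hcg₁ : ∀ l : ℝ, 0 < l → ContinuousAt g₁ l)
    (hF₀0 : Tendsto F₀ (𝓝[>] 0) (𝓝 0)) (hF₁0 : Tendsto F₁ (𝓝[>] 0) (𝓝 0))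
    (hF₀np : ∀ l : ℝ, 0 < l → F₀ l ≤ 0) (hF₁np : ∀ l : ℝ, 0 < l → F₁ l ≤ 0)
    (hterm : ∀ l₁ l₂ : ℝ, 0 < l₁ → 0 < l₂ → ∀ a : ℝ,
      mr ≤ l₂/(l₁+l₂) * (F₀ l₁ + l₁ * (g₀ l₁ - a)) + l₁/(l₁+l₂) * (F₁ l₂ + l₂ * (g₁ l₂ + a))) :
    (∃ l₁ l₂ : ℝ, 0 < l₁ ∧ 0 < l₂ ∧ mr - ε ≤ F₀ l₁ ∧ mr - ε ≤ F₁ l₂ ∧ 0 < g₀ l₁ + g₁ l₂)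
    ∨ (∀ l₁ l₂ : ℝ, 0 < l₁ → 0 < l₂ → g₀ l₁ + g₁ l₂ ≤ 0) := by
  by_cases hP1 : ∃ l₁ l₂ : ℝ, 0 < l₁ ∧ 0 < l₂ ∧ mr - ε ≤ F₀ l₁ ∧ mr - ε ≤ F₁ l₂ ∧
      0 < g₀ l₁ + g₁ l₂
  · exact Or.inl hP1
  right
  push_neg at hP1
  by_contra hP2
  push_neg at hP2
  obtain ⟨a₁, a₂, ha₁, ha₂, hgpos⟩ := hP2
  have hmrε : mr - ε < 0 := by linarith
  -- small-l neighborhoods where F > mr - ε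
  obtain ⟨δ₀, hδ₀Ioi, hδ₀sub⟩ := mem_nhdsGT_iff_exists_Ioc_subset.mp
    (hF₀0.eventually (eventually_gt_nhds hmrε))
  obtain ⟨δ₁, hδ₁Ioi, hδ₁sub⟩ := mem_nhdsGT_iff_exists_Ioc_subset.mp
    (hF₁0.eventually (eventually_gt_nhds hmrε))
  have hδ₀pos : 0 < δ₀ := hδ₀Ioi
  have hδ₁pos : 0 < δ₁ := hδ₁Ioi
  set Z₀ : Set ℝ := {l | δ₀ ≤ l ∧ F₀ l ≤ mr - ε} with hZ₀
  set Z₁ : Set ℝ := {l | δ₁ ≤ l ∧ F₁ l ≤ mr - ε} with hZ₁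
  have hmemZ₀ : ∀ l : ℝ, 0 < l → F₀ l ≤ mr - ε → l ∈ Z₀ := by
    intro l hl hF
    refine ⟨?_, hF⟩
    by_contra hlt
    push_neg at hlt
    have : mr - ε < F₀ l := hδ₀sub ⟨hl, hlt.le⟩
    linarith
  have hmemZ₁ : ∀ l : ℝ, 0 < l → F₁ l ≤ mr - ε → l ∈ Z₁ := by
    intro l hl hF
    refine ⟨?_, hF⟩
    by_contra hlt
    push_neg at hlt
    have : mr - ε < F₁ l := hδ₁sub ⟨hl, hlt.le⟩
    linarith
  have hZ₀closed : IsClosed Z₀ := by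
    have : Z₀ = Ici δ₀ ∩ F₀ ⁻¹' (Iic (mr - ε)) := by
      ext l; simp [hZ₀, and_comm]
    rw [this]
    refine ContinuousOn.preimage_isClosed_of_isClosed ?_ isClosed_Ici isClosed_Iic
    intro l hl
    exact (hcF₀ l (lt_of_lt_of_le hδ₀pos hl)).continuousWithinAt
  have hZ₁closed : IsClosed Z₁ := by
    have : Z₁ = Ici δ₁ ∩ F₁ ⁻¹' (Iic (mr - ε)) := by
      ext l; simp [hZ₁, and_comm]
    rw [this]
    refine ContinuousOn.preimage_isClosed_of_isClosed ?_ isClosed_Ici isClosed_Iic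
    intro l hl
    exact (hcF₁ l (lt_of_lt_of_le hδ₁pos hl)).continuousWithinAt
  -- main case analysis
  rcases Z₀.eq_empty_or_nonempty with hZ₀e | hZ₀ne
  · rcases Z₁.eq_empty_or_nonempty with hZ₁e | hZ₁ne
    · -- both empty : P1 holds for a₁ a₂, contradiction
      have h₀ : mr - ε ≤ F₀ a₁ := by
        by_contra hlt
        push_neg at hlt
        have := hmemZ₀ a₁ ha₁ hlt.le
        rw [hZ₀e] at this
        exact this
      have h₁ : mr - ε ≤ F₁ a₂ := by
        by_contra hlt
        push_neg at hlt
        have := hmemZ₁ a₂ ha₂ hlt.le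
        rw [hZ₁e] at this
        exact this
      have := hP1 a₁ a₂ ha₁ ha₂ h₀ h₁
      linarith
    · -- Z₀ empty, Z₁ nonempty
      set v := sInf Z₁ with hv
      have hbdd : BddBelow Z₁ := ⟨δ₁, fun z hz => hz.1⟩
      have hvmem : v ∈ Z₁ := hZ₁closed.csInf_mem hZ₁ne hbdd
      have hvpos : 0 < v := lt_of_lt_of_le hδ₁pos hvmem.1
      have hvF : F₁ v ≤ mr - ε := hvmem.2
      have hbelow₁ : ∀ l : ℝ, 0 < l → l < v → mr - ε < F₁ l := by
        intro l hl hlv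
        by_contra hc
        push_neg at hc
        have := csInf_le hbdd (hmemZ₁ l hl hc)
        rw [← hv] at this
        linarith
      have hF₀all : ∀ l : ℝ, 0 < l → mr - ε ≤ F₀ l := by
        intro l hl
        by_contra hc
        push_neg at hc
        have := hmemZ₀ l hl hc.le
        rw [hZ₀e] at this
        exact this
      have hC₁ : ∀ l₁ : ℝ, 0 < l₁ → g₀ l₁ + g₁ v ≤ 0 := by
        intro l₁ hl₁
        have hev : ∀ᶠ l in 𝓝[<] v, g₀ l₁ + g₁ l ≤ 0 := by
          filter_upwards [Ioo_mem_nhdsLT_of_mem (show v ∈ Ioc (0:ℝ) v from ⟨hvpos, le_rfl⟩)]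
            with l hl
          exact hP1 l₁ l hl₁ hl.1 (hF₀all l₁ hl₁) (hbelow₁ l hl.1 hl.2).le
        have htd : Tendsto (fun l => g₀ l₁ + g₁ l) (𝓝[<] v) (𝓝 (g₀ l₁ + g₁ v)) :=
          (tendsto_const_nhds.add ((hcg₁ v hvpos).tendsto.mono_left nhdsWithin_le_nhds))
        exact le_of_tendsto htd hev
      -- contradiction using hterm l₁ v with a := - g₁ v
      obtain ⟨hp0, hp1, hplt⟩ := p0_facts hmr0 (show F₁ v < mr by linarith)
      set p₀ := (mr / F₁ v + 1) / 2 with hp₀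
      obtain ⟨l₁, hl₁pos, hl₁eq⟩ := ratio_exists hvpos hp0 hp1
      have hterm' := hterm l₁ v hl₁pos hvpos (-(g₁ v))
      have hden : 0 < l₁ + v := by linarith
      have e1 : F₀ l₁ + l₁ * (g₀ l₁ - -(g₁ v)) ≤ 0 := by
        have := hC₁ l₁ hl₁pos
        have h2 := hF₀np l₁ hl₁pos
        nlinarith
      have e2 : F₁ v + v * (g₁ v + -(g₁ v)) = F₁ v := by ring
      rw [e2] at hterm'
      have hq : l₁ / (l₁ + v) = p₀ := by
        rw [← hl₁eq]
        rw [add_comm]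
      have hcoef1 : 0 ≤ v / (l₁ + v) := by positivity
      have hstep : mr ≤ p₀ * F₁ v := by
        have h3 : v/(l₁+v) * (F₀ l₁ + l₁ * (g₀ l₁ - -(g₁ v))) ≤ 0 :=
          mul_nonpos_of_nonneg_of_nonpos hcoef1 e1
        rw [hq] at hterm'
        linarith
      rw [mul_comm] at hplt
      linarith
  · -- Z₀ nonempty
    set u := sInf Z₀ with hu
    have hbdd : BddBelow Z₀ := ⟨δ₀, fun z hz => hz.1⟩
    have humem : u ∈ Z₀ := hZ₀closed.csInf_mem hZ₀ne hbdd
    have hupos : 0 < u := lt_of_lt_of_le hδ₀pos humem.1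
    have huF : F₀ u ≤ mr - ε := humem.2
    have hbelow₀ : ∀ l : ℝ, 0 < l → l < u → mr - ε < F₀ l := by
      intro l hl hlu
      by_contra hc
      push_neg at hc
      have := csInf_le hbdd (hmemZ₀ l hl hc)
      rw [← hu] at this
      linarith
    have hC₀ : ∀ l₂ : ℝ, 0 < l₂ → mr - ε ≤ F₁ l₂ → g₀ u + g₁ l₂ ≤ 0 := by
      intro l₂ hl₂ hF₁l₂
      have hev : ∀ᶠ l in 𝓝[<] u, g₀ l + g₁ l₂ ≤ 0 := by
        filter_upwards [Ioo_mem_nhdsLT_of_mem (show u ∈ Ioc (0:ℝ) u from ⟨hupos, le_rfl⟩)]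
          with l hl
        exact hP1 l l₂ hl.1 hl₂ (hbelow₀ l hl.1 hl.2).le hF₁l₂
      have htd : Tendsto (fun l => g₀ l + g₁ l₂) (𝓝[<] u) (𝓝 (g₀ u + g₁ l₂)) :=
        (((hcg₀ u hupos).tendsto.mono_left nhdsWithin_le_nhds).add tendsto_const_nhds)
      exact le_of_tendsto htd hev
    rcases Z₁.eq_empty_or_nonempty with hZ₁e | hZ₁ne
    · -- Z₀ nonempty, Z₁ empty
      have hF₁all : ∀ l : ℝ, 0 < l → mr - ε ≤ F₁ l := by
        intro l hl
        by_contra hc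
        push_neg at hc
        have := hmemZ₁ l hl hc.le
        rw [hZ₁e] at this
        exact this
      obtain ⟨hp0, hp1, hplt⟩ := p0_facts hmr0 (show F₀ u < mr by linarith)
      set p₀ := (mr / F₀ u + 1) / 2 with hp₀
      obtain ⟨l₂, hl₂pos, hl₂eq⟩ := ratio_exists hupos hp0 hp1
      have hterm' := hterm u l₂ hupos hl₂pos (g₀ u)
      have e1 : F₀ u + u * (g₀ u - g₀ u) = F₀ u := by ring
      rw [e1] at hterm'
      have e2 : F₁ l₂ + l₂ * (g₁ l₂ + g₀ u) ≤ 0 := by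
        have h1 := hC₀ l₂ hl₂pos (hF₁all l₂ hl₂pos)
        have h2 := hF₁np l₂ hl₂pos
        nlinarith
      have hcoef2 : 0 ≤ u / (u + l₂) := by positivity
      have hstep : mr ≤ p₀ * F₀ u := by
        have h3 : u/(u+l₂) * (F₁ l₂ + l₂ * (g₁ l₂ + g₀ u)) ≤ 0 :=
          mul_nonpos_of_nonneg_of_nonpos hcoef2 e2
        rw [hl₂eq] at hterm'
        linarith
      rw [mul_comm] at hplt
      linarith
    · -- both nonempty
      set v := sInf Z₁ with hv
      have hbdd₁ : BddBelow Z₁ := ⟨δ₁, fun z hz => hz.1⟩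
      have hvmem : v ∈ Z₁ := hZ₁closed.csInf_mem hZ₁ne hbdd₁
      have hvpos : 0 < v := lt_of_lt_of_le hδ₁pos hvmem.1
      have hvF : F₁ v ≤ mr - ε := hvmem.2
      have hbelow₁ : ∀ l : ℝ, 0 < l → l < v → mr - ε < F₁ l := by
        intro l hl hlv
        by_contra hc
        push_neg at hc
        have := csInf_le hbdd₁ (hmemZ₁ l hl hc)
        rw [← hv] at this
        linarith
      have hguv : g₀ u + g₁ v ≤ 0 := by
        have hev : ∀ᶠ l in 𝓝[<] v, g₀ u + g₁ l ≤ 0 := by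
          filter_upwards [Ioo_mem_nhdsLT_of_mem (show v ∈ Ioc (0:ℝ) v from ⟨hvpos, le_rfl⟩)]
            with l hl
          exact hC₀ l hl.1 (hbelow₁ l hl.1 hl.2).le
        have htd : Tendsto (fun l => g₀ u + g₁ l) (𝓝[<] v) (𝓝 (g₀ u + g₁ v)) :=
          (tendsto_const_nhds.add ((hcg₁ v hvpos).tendsto.mono_left nhdsWithin_le_nhds))
        exact le_of_tendsto htd hev
      have hterm' := hterm u v hupos hvpos (g₀ u)
      have e1 : F₀ u + u * (g₀ u - g₀ u) = F₀ u := by ring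
      rw [e1] at hterm'
      have e2 : F₁ v + v * (g₁ v + g₀ u) ≤ mr - ε := by
        nlinarith
      have hden : 0 < u + v := by linarith
      have hc1 : 0 ≤ v / (u + v) := by positivity
      have hc2 : 0 ≤ u / (u + v) := by positivity
      have hsum : v / (u + v) + u / (u + v) = 1 := by
        rw [← add_div, add_comm, div_self hden.ne']
      have hb1 : v/(u+v) * (F₀ u + u * (g₀ u - g₀ u))
          ≤ v/(u+v) * (mr - ε) := by
        rw [e1]
        exact mul_le_mul_of_nonneg_left (by linarith) hc1
      have hb2 : u/(u+v) * (F₁ v + v * (g₁ v + g₀ u)) ≤ u/(u+v) * (mr - ε) :=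
        mul_le_mul_of_nonneg_left e2 hc2
      have : mr ≤ mr - ε := by
        have h4 : v/(u+v) * (mr-ε) + u/(u+v) * (mr-ε) = mr - ε := by
          rw [← add_mul, hsum, one_mul]
        rw [e1] at hb1
        linarith
      linarith

end Stmt15w


open MeasureTheory Filter Set Topology
namespace Stmt15v
open Stmt15x Stmt15y Stmt15z Stmt15w

variable {E : Type*} [MeasurableSpace E]

set_option maxHeartbeats 3200000 in
lemma two_sided (μ0 ν : Measure E) [IsProbabilityMeasure μ0] [IsProbabilityMeasure ν]
    (h : E → ℝ) (hmeas : Measurable h)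
    (hexp0 : ∀ l : ℝ, 0 < l → Integrable (fun x => Real.exp (l * h x)) μ0)
    (hexp1' : ∀ l : ℝ, 0 < l → Integrable (fun x => Real.exp (l * (-h x))) ν)
    (mr : ℝ)
    (hmr : ∀ l₁ l₂ : ℝ, 0 < l₁ → 0 < l₂ →
      mr ≤ l₂/(l₁+l₂) * Real.log (Mgf μ0 h l₁)
        + l₁/(l₁+l₂) * Real.log (Mgf ν (fun x => -h x) l₂))
    {ε : ℝ} (hε : 0 < ε) :
    ∃ N : ℕ, 0 < N ∧ ∀ n : ℕ, N ≤ n → ∀ γ : ℝ,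
      ENNReal.ofReal (Real.exp (n * (mr - ε)))
        ≤ Measure.pi (fun _ : Fin n => μ0) {y | γ ≤ ∑ t, h (y t)}
          + Measure.pi (fun _ : Fin n => ν) {y | ∑ t, h (y t) < γ} := by
  set f1 : E → ℝ := fun x => -h x with hf1
  have hmeas1 : Measurable f1 := hmeas.neg
  -- step A : mr ≤ 0
  have hmr0 : mr ≤ 0 := by
    have hhalf : ∀ᶠ l in 𝓝[>] (0:ℝ),
        mr ≤ (1/2) * Real.log (Mgf μ0 h l) + (1/2) * Real.log (Mgf ν f1 l) := by
      filter_upwards [self_mem_nhdsWithin] with l hl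
      have hl' : (0:ℝ) < l := hl
      have := hmr l l hl' hl'
      have hhalfeq : l/(l+l) = (1:ℝ)/2 := by
        rw [div_eq_div_iff (by linarith) (by norm_num)]
        ring
      rw [hhalfeq] at this
      exact this
    have hlog0 : Tendsto (fun l => Real.log (Mgf μ0 h l)) (𝓝[>] (0:ℝ)) (𝓝 0) := by
      have := (Real.continuousAt_log one_ne_zero).tendsto.comp (tendsto_Mgf_zero hmeas hexp0)
      rw [Real.log_one] at this; exact this
    have hlog1 : Tendsto (fun l => Real.log (Mgf ν f1 l)) (𝓝[>] (0:ℝ)) (𝓝 0) := by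
      have := (Real.continuousAt_log one_ne_zero).tendsto.comp (tendsto_Mgf_zero hmeas1 hexp1')
      rw [Real.log_one] at this; exact this
    have htd := (hlog0.const_mul (1/2:ℝ)).add (hlog1.const_mul (1/2:ℝ))
    rw [mul_zero, add_zero] at htd
    exact ge_of_tendsto htd hhalf
  -- step B : the decomposed term inequality
  have hterm : ∀ l₁ l₂ : ℝ, 0 < l₁ → 0 < l₂ → ∀ a : ℝ,
      mr ≤ l₂/(l₁+l₂) * (Fm μ0 h l₁ + l₁ * (gm μ0 h l₁ - a))
        + l₁/(l₁+l₂) * (Fm ν f1 l₂ + l₂ * (gm ν f1 l₂ + a)) := by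
    intro l₁ l₂ h1 h2 a
    have hne : l₁ + l₂ ≠ 0 := by positivity
    have hle := hmr l₁ l₂ h1 h2
    have heq : l₂/(l₁+l₂) * (Fm μ0 h l₁ + l₁ * (gm μ0 h l₁ - a))
        + l₁/(l₁+l₂) * (Fm ν f1 l₂ + l₂ * (gm ν f1 l₂ + a))
        = l₂/(l₁+l₂) * Real.log (Mgf μ0 h l₁) + l₁/(l₁+l₂) * Real.log (Mgf ν f1 l₂) := by
      rw [Fm, Fm]
      field_simp
      ring
    rw [heq]
    exact hle
  -- step C : dichotomy
  have hε4 : 0 < ε/4 := by positivity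
  rcases key_dichotomy (gm μ0 h) (Fm μ0 h) (gm ν f1) (Fm ν f1) mr (ε/4) hε4 hmr0
      (fun l hl => continuousAt_Fm hmeas hexp0 hl) (fun l hl => continuousAt_Fm hmeas1 hexp1' hl)
      (fun l hl => continuousAt_gm hmeas hexp0 hl) (fun l hl => continuousAt_gm hmeas1 hexp1' hl)
      (tendsto_Fm_zero hmeas hexp0) (tendsto_Fm_zero hmeas1 hexp1')
      (fun l hl => Fm_nonpos hmeas hexp0 hl) (fun l hl => Fm_nonpos hmeas1 hexp1' hl)
      hterm with hP1 | hP2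
  · -- tilting branch
    obtain ⟨l₁, l₂, hl₁, hl₂, hF₀, hF₁, hg⟩ := hP1
    set κ := min (min ((ε/4)/l₁) ((ε/4)/l₂)) ((gm μ0 h l₁ + gm ν f1 l₂)/2) with hκdef
    have hκpos : 0 < κ := by
      refine lt_min (lt_min (by positivity) (by positivity)) (by linarith)
    obtain ⟨N₀, hN₀pos, hcert₀⟩ := chernoff_lower (μ := μ0) hmeas hexp0 hl₁ hκpos
    obtain ⟨N₁, hN₁pos, hcert₁⟩ := chernoff_lower (μ := ν) (f := f1) hmeas1 hexp1' hl₂ hκpos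
    refine ⟨max (max N₀ N₁) (Nat.ceil (Real.log 2 / (ε/4)) + 1), by positivity, fun n hn γ => ?_⟩
    have hnN₀ : N₀ ≤ n := le_trans (le_trans (le_max_left _ _) (le_max_left _ _)) hn
    have hnN₁ : N₁ ≤ n := le_trans (le_trans (le_max_right _ _) (le_max_left _ _)) hn
    have hn0 : 0 < n := lt_of_lt_of_le (lt_of_lt_of_le hN₀pos (le_trans (le_max_left _ _)
      (le_max_left _ _))) hn
    have hn0R : (0:ℝ) < n := by exact_mod_cast hn0
    have hnlog : Real.log 2 ≤ n * (ε/4) := by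
      have h1 : Real.log 2 / (ε/4) ≤ (n:ℝ) := by
        calc Real.log 2 / (ε/4) ≤ (Nat.ceil (Real.log 2 / (ε/4)) : ℝ) := Nat.le_ceil _
          _ ≤ n := by
            exact_mod_cast le_trans (Nat.le_succ _) (le_trans (le_max_right _ _) hn)
      rw [div_le_iff₀ hε4] at h1
      linarith
    set a := γ / n with ha
    have hna : (n:ℝ) * a = γ := by
      rw [ha, mul_div_cancel₀ _ hn0R.ne']
    rcases le_or_gt a (gm μ0 h l₁ - κ) with hcase | hcase
    · -- use the μ0-side certificate
      have hbound := hcert₀ n hnN₀ a hcase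
      have hκ1 : l₁ * κ ≤ ε/4 := by
        have : κ ≤ (ε/4)/l₁ := le_trans (min_le_left _ _) (min_le_left _ _)
        rw [le_div_iff₀ hl₁] at this
        linarith
      have hreal : Real.exp (n * (mr - ε)) ≤ Real.exp (n * (Fm μ0 h l₁ - l₁ * κ)) / 2 := by
        rw [div_eq_mul_inv, ← Real.exp_log (show (0:ℝ) < 2 by norm_num), ← Real.exp_neg,
          ← Real.exp_add]
        refine Real.exp_le_exp.mpr ?_
        have hF : mr - ε/4 - ε/4 ≤ Fm μ0 h l₁ - l₁ * κ := by linarith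
        have hmono : n * (mr - ε/2) ≤ n * (Fm μ0 h l₁ - l₁ * κ) :=
          mul_le_mul_of_nonneg_left (by linarith) hn0R.le
        nlinarith [hnlog]
      calc ENNReal.ofReal (Real.exp (n * (mr - ε)))
          ≤ ENNReal.ofReal (Real.exp (n * (Fm μ0 h l₁ - l₁ * κ)) / 2) :=
            ENNReal.ofReal_le_ofReal hreal
        _ ≤ Measure.pi (fun _ : Fin n => μ0) {y | n * a < ∑ t, h (y t)} := hbound
        _ ≤ Measure.pi (fun _ : Fin n => μ0) {y | γ ≤ ∑ t, h (y t)} := by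
            refine measure_mono fun y hy => ?_
            simp only [mem_setOf_eq] at hy ⊢
            rw [← hna]
            exact hy.le
        _ ≤ _ := self_le_add_right _ _
    · -- use the ν-side certificate
      have hc' : -a ≤ gm ν f1 l₂ - κ := by
        have hκ2 : κ ≤ (gm μ0 h l₁ + gm ν f1 l₂)/2 := min_le_right _ _
        linarith
      have hbound := hcert₁ n hnN₁ (-a) hc'
      have hseteq : {y : Fin n → E | (n:ℝ) * (-a) < ∑ t, f1 (y t)}
          = {y : Fin n → E | ∑ t, h (y t) < γ} := by
        ext y
        simp only [mem_setOf_eq, hf1]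
        rw [Finset.sum_neg_distrib]
        constructor
        · intro hy
          nlinarith [hna]
        · intro hy
          nlinarith [hna]
      have hκ1 : l₂ * κ ≤ ε/4 := by
        have : κ ≤ (ε/4)/l₂ := le_trans (min_le_left _ _) (min_le_right _ _)
        rw [le_div_iff₀ hl₂] at this
        linarith
      have hreal : Real.exp (n * (mr - ε)) ≤ Real.exp (n * (Fm ν f1 l₂ - l₂ * κ)) / 2 := by
        rw [div_eq_mul_inv, ← Real.exp_log (show (0:ℝ) < 2 by norm_num), ← Real.exp_neg,
          ← Real.exp_add]
        refine Real.exp_le_exp.mpr ?_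
        have hF : mr - ε/4 - ε/4 ≤ Fm ν f1 l₂ - l₂ * κ := by linarith
        have hmono : n * (mr - ε/2) ≤ n * (Fm ν f1 l₂ - l₂ * κ) :=
          mul_le_mul_of_nonneg_left (by linarith) hn0R.le
        nlinarith [hnlog]
      calc ENNReal.ofReal (Real.exp (n * (mr - ε)))
          ≤ ENNReal.ofReal (Real.exp (n * (Fm ν f1 l₂ - l₂ * κ)) / 2) :=
            ENNReal.ofReal_le_ofReal hreal
        _ ≤ Measure.pi (fun _ : Fin n => ν) {y | (n:ℝ) * (-a) < ∑ t, f1 (y t)} := hbound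
        _ = Measure.pi (fun _ : Fin n => ν) {y | ∑ t, h (y t) < γ} := by rw [hseteq]
        _ ≤ _ := self_le_add_left _ _
  · -- separated-support branch
    set c := sSup ((gm μ0 h) '' (Ioi 0)) with hcdef
    have hnonempty : ((gm μ0 h) '' (Ioi 0)).Nonempty :=
      ⟨gm μ0 h 1, 1, by norm_num, rfl⟩
    have hbdd : BddAbove ((gm μ0 h) '' (Ioi 0)) := by
      refine ⟨-gm ν f1 1, ?_⟩
      rintro y ⟨l, hl, rfl⟩
      have := hP2 l 1 hl one_pos
      linarith
    have hg₀le : ∀ l : ℝ, 0 < l → gm μ0 h l ≤ c :=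
      fun l hl => le_csSup hbdd ⟨l, hl, rfl⟩
    have hcle : ∀ l : ℝ, 0 < l → c ≤ -gm ν f1 l := by
      intro l hl
      refine csSup_le hnonempty ?_
      rintro y ⟨l', hl', rfl⟩
      have := hP2 l' l hl' hl
      linarith
    have hae₀ : ∀ᵐ x ∂μ0, h x ≤ c := ae_le_of_gm_le hmeas hexp0 hg₀le
    have hae₁ : ∀ᵐ x ∂ν, f1 x ≤ -c := by
      refine ae_le_of_gm_le hmeas1 hexp1' fun l hl => ?_
      have := hcle l hl
      linarith
    set D₀ : ℝ → ℝ := fun l => Mgf μ0 h l * Real.exp (-(l * c)) with hD₀def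
    set D₁ : ℝ → ℝ := fun l => Mgf ν f1 l * Real.exp (-(l * (-c))) with hD₁def
    have hD₀pos : ∀ l : ℝ, 0 < l → 0 < D₀ l := fun l hl => by
      have := Mgf_pos hexp0 hl
      positivity
    have hD₁pos : ∀ l : ℝ, 0 < l → 0 < D₁ l := fun l hl => by
      have := Mgf_pos hexp1' hl
      positivity
    have hD₀le1 : ∀ l : ℝ, 0 < l → D₀ l ≤ 1 := by
      intro l hl
      have h1 : Mgf μ0 h l ≤ Real.exp (l * c) := Mgf_le_of_ae_le hexp0 hae₀ hl
      have h2 : (0:ℝ) < Real.exp (-(l * c)) := Real.exp_pos _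
      calc D₀ l ≤ Real.exp (l * c) * Real.exp (-(l * c)) := by
            rw [hD₀def]
            exact mul_le_mul_of_nonneg_right h1 h2.le
        _ = 1 := by rw [← Real.exp_add, add_neg_cancel, Real.exp_zero]
    have hD₁le1 : ∀ l : ℝ, 0 < l → D₁ l ≤ 1 := by
      intro l hl
      have h1 : Mgf ν f1 l ≤ Real.exp (l * (-c)) := Mgf_le_of_ae_le hexp1' hae₁ hl
      have h2 : (0:ℝ) < Real.exp (-(l * (-c))) := Real.exp_pos _
      calc D₁ l ≤ Real.exp (l * (-c)) * Real.exp (-(l * (-c))) := by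
            rw [hD₁def]
            exact mul_le_mul_of_nonneg_right h1 h2.le
        _ = 1 := by rw [← Real.exp_add, add_neg_cancel, Real.exp_zero]
    have hX : ∀ l : ℝ, 0 < l → Real.log (D₀ l) = Real.log (Mgf μ0 h l) - l * c := by
      intro l hl
      rw [hD₀def]
      rw [Real.log_mul (Mgf_pos hexp0 hl).ne' (Real.exp_ne_zero _), Real.log_exp]
      ring
    have hY : ∀ l : ℝ, 0 < l → Real.log (D₁ l) = Real.log (Mgf ν f1 l) + l * c := by
      intro l hl
      rw [hD₁def]
      rw [Real.log_mul (Mgf_pos hexp1' hl).ne' (Real.exp_ne_zero _), Real.log_exp]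
      ring
    have hlogD₀np : ∀ l : ℝ, 0 < l → Real.log (D₀ l) ≤ 0 :=
      fun l hl => Real.log_nonpos (hD₀pos l hl).le (hD₀le1 l hl)
    have hlogD₁np : ∀ l : ℝ, 0 < l → Real.log (D₁ l) ≤ 0 :=
      fun l hl => Real.log_nonpos (hD₁pos l hl).le (hD₁le1 l hl)
    have hmrDD : ∀ l₁ l₂ : ℝ, 0 < l₁ → 0 < l₂ →
        mr ≤ l₂/(l₁+l₂) * Real.log (D₀ l₁) + l₁/(l₁+l₂) * Real.log (D₁ l₂) := by
      intro l₁ l₂ h1 h2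
      have hne : l₁ + l₂ ≠ 0 := by positivity
      have hle := hmr l₁ l₂ h1 h2
      have heq : l₂/(l₁+l₂) * Real.log (D₀ l₁) + l₁/(l₁+l₂) * Real.log (D₁ l₂)
          = l₂/(l₁+l₂) * Real.log (Mgf μ0 h l₁) + l₁/(l₁+l₂) * Real.log (Mgf ν f1 l₂) := by
        rw [hX l₁ h1, hY l₂ h2]
        field_simp
        ring
      rw [heq]
      exact hle
    have hmrX : ∀ l₁ : ℝ, 0 < l₁ → mr ≤ Real.log (D₀ l₁) := by
      intro l₁ hl₁
      by_contra hclt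
      push_neg at hclt
      obtain ⟨hp0, hp1, hplt⟩ := p0_facts hmr0 hclt
      obtain ⟨l₂, hl₂pos, hl₂eq⟩ := ratio_exists hl₁ hp0 hp1
      have hkey := hmrDD l₁ l₂ hl₁ hl₂pos
      rw [hl₂eq] at hkey
      have hc2 : 0 ≤ l₁/(l₁+l₂) := by positivity
      have h3 : l₁/(l₁+l₂) * Real.log (D₁ l₂) ≤ 0 :=
        mul_nonpos_of_nonneg_of_nonpos hc2 (hlogD₁np l₂ hl₂pos)
      rw [mul_comm] at hplt
      linarith
    have hmrY : ∀ l₂ : ℝ, 0 < l₂ → mr ≤ Real.log (D₁ l₂) := by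
      intro l₂ hl₂
      by_contra hclt
      push_neg at hclt
      obtain ⟨hp0, hp1, hplt⟩ := p0_facts hmr0 hclt
      obtain ⟨l₁, hl₁pos, hl₁eq⟩ := ratio_exists hl₂ hp0 hp1
      have hkey := hmrDD l₁ l₂ hl₁pos hl₂
      rw [add_comm l₁ l₂] at hkey
      rw [hl₁eq] at hkey
      have hc2 : 0 ≤ l₂/(l₂+l₁) := by positivity
      have h3 : l₂/(l₂+l₁) * Real.log (D₀ l₁) ≤ 0 :=
        mul_nonpos_of_nonneg_of_nonpos hc2 (hlogD₀np l₁ hl₁pos)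
      rw [mul_comm] at hplt
      linarith
    -- limits at infinity
    set p : ℝ := (μ0 {x | c ≤ h x}).toReal with hpdef
    set q : ℝ := (ν {x | -c ≤ f1 x}).toReal with hqdef
    have htd₀ : Tendsto D₀ atTop (𝓝 p) := by
      have h1 := tendsto_shift_atTop hmeas hae₀
      refine Tendsto.congr (fun l => ?_) h1
      rw [shift_eq]
    have htd₁ : Tendsto D₁ atTop (𝓝 q) := by
      have h1 := tendsto_shift_atTop hmeas1 hae₁
      refine Tendsto.congr (fun l => ?_) h1
      rw [shift_eq]
    have hp : Real.exp mr ≤ p := by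
      refine ge_of_tendsto htd₀ ?_
      filter_upwards [Ioi_mem_atTop (0:ℝ)] with l hl
      have := hmrX l hl
      calc Real.exp mr ≤ Real.exp (Real.log (D₀ l)) := Real.exp_le_exp.mpr this
        _ = D₀ l := Real.exp_log (hD₀pos l hl)
    have hq : Real.exp mr ≤ q := by
      refine ge_of_tendsto htd₁ ?_
      filter_upwards [Ioi_mem_atTop (0:ℝ)] with l hl
      have := hmrY l hl
      calc Real.exp mr ≤ Real.exp (Real.log (D₁ l)) := Real.exp_le_exp.mpr this
        _ = D₁ l := Real.exp_log (hD₁pos l hl)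
    -- conclusion
    refine ⟨1, one_pos, fun n hn γ => ?_⟩
    have hsmeas₀ : MeasurableSet {x | c ≤ h x} := measurableSet_le measurable_const hmeas
    have hsmeas₁ : MeasurableSet {x | -c ≤ f1 x} := measurableSet_le measurable_const hmeas1
    have hofReal : ENNReal.ofReal (Real.exp (n * (mr - ε)))
        = (ENNReal.ofReal (Real.exp (mr - ε)))^n := by
      rw [← ENNReal.ofReal_pow (Real.exp_nonneg _), ← Real.exp_nat_mul]
    rcases le_or_gt γ ((n:ℝ) * c) with hγ | hγ
    · -- use the μ0 side
      have hsubset : Set.pi Set.univ (fun _ : Fin n => {x | c ≤ h x})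
          ⊆ {y : Fin n → E | γ ≤ ∑ t, h (y t)} := by
        intro y hy
        simp only [Set.mem_pi, Set.mem_univ, forall_true_left, mem_setOf_eq] at hy ⊢
        have h1 : ∑ t : Fin n, c ≤ ∑ t : Fin n, h (y t) :=
          Finset.sum_le_sum (fun t _ => hy t)
        rw [Finset.sum_const, Finset.card_univ, Fintype.card_fin, nsmul_eq_mul] at h1
        linarith
      have hmeaspi : Measure.pi (fun _ : Fin n => μ0)
          (Set.pi Set.univ (fun _ : Fin n => {x | c ≤ h x}))
          = (μ0 {x | c ≤ h x})^n := by
        rw [Measure.pi_pi]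
        simp [Finset.prod_const]
      have hle1 : ENNReal.ofReal (Real.exp (mr - ε)) ≤ μ0 {x | c ≤ h x} := by
        refine ENNReal.ofReal_le_of_le_toReal ?_
        rw [← hpdef]
        calc Real.exp (mr - ε) ≤ Real.exp mr := Real.exp_le_exp.mpr (by linarith)
          _ ≤ p := hp
      calc ENNReal.ofReal (Real.exp (n * (mr - ε)))
          = (ENNReal.ofReal (Real.exp (mr - ε)))^n := hofReal
        _ ≤ (μ0 {x | c ≤ h x})^n := pow_le_pow_left' hle1 n
        _ = Measure.pi (fun _ : Fin n => μ0)
            (Set.pi Set.univ (fun _ : Fin n => {x | c ≤ h x})) := hmeaspi.symm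
        _ ≤ Measure.pi (fun _ : Fin n => μ0) {y | γ ≤ ∑ t, h (y t)} := measure_mono hsubset
        _ ≤ _ := self_le_add_right _ _
    · -- use the ν side
      have hsubset : Set.pi Set.univ (fun _ : Fin n => {x | -c ≤ f1 x})
          ⊆ {y : Fin n → E | ∑ t, h (y t) < γ} := by
        intro y hy
        simp only [Set.mem_pi, Set.mem_univ, forall_true_left, mem_setOf_eq, hf1] at hy ⊢
        have h1 : ∑ t : Fin n, h (y t) ≤ ∑ t : Fin n, c := by
          refine Finset.sum_le_sum (fun t _ => ?_)
          have := hy t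
          linarith
        rw [Finset.sum_const, Finset.card_univ, Fintype.card_fin, nsmul_eq_mul] at h1
        linarith
      have hmeaspi : Measure.pi (fun _ : Fin n => ν)
          (Set.pi Set.univ (fun _ : Fin n => {x | -c ≤ f1 x}))
          = (ν {x | -c ≤ f1 x})^n := by
        rw [Measure.pi_pi]
        simp [Finset.prod_const]
      have hle1 : ENNReal.ofReal (Real.exp (mr - ε)) ≤ ν {x | -c ≤ f1 x} := by
        refine ENNReal.ofReal_le_of_le_toReal ?_
        rw [← hqdef]
        calc Real.exp (mr - ε) ≤ Real.exp mr := Real.exp_le_exp.mpr (by linarith)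
          _ ≤ q := hq
      calc ENNReal.ofReal (Real.exp (n * (mr - ε)))
          = (ENNReal.ofReal (Real.exp (mr - ε)))^n := hofReal
        _ ≤ (ν {x | -c ≤ f1 x})^n := pow_le_pow_left' hle1 n
        _ = Measure.pi (fun _ : Fin n => ν)
            (Set.pi Set.univ (fun _ : Fin n => {x | -c ≤ f1 x})) := hmeaspi.symm
        _ ≤ Measure.pi (fun _ : Fin n => ν) {y | ∑ t, h (y t) < γ} := measure_mono hsubset
        _ ≤ _ := self_le_add_left _ _

end Stmt15v


open MeasureTheory ProbabilityTheory Filter Set ENNReal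

set_option maxHeartbeats 1000000

/-- Let `μ0` be the null law of the pivotal statistic and `ν` the law under
the least-favorable alternative, with `∫ e^{λh} dμ0 < ∞` and `∫ e^{−λh} dν < ∞` for every
`λ > 0`. Define `S_ν = − inf_{λ₁,λ₂ > 0} [ (λ₂/(λ₁+λ₂)) log ∫ e^{λ₁ h} dμ0
  + (λ₁/(λ₁+λ₂)) log ∫ e^{−λ₂ h} dν ]`. Then for every `b ∈ (0,1)` there is `N` such that
for all `n ≥ N` and every threshold `γ`,
`[ ℙ_{μ0^{⊗n}}(∑ h(Y_t) ≥ γ) + ℙ_{ν^{⊗n}}(∑ h(Y_t) < γ) ]^{1/n} ≥ b e^{−S_ν}`: no threshold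
for the test based on `∑ h(Y_t)` achieves a faster exponential decay rate than `S_ν`. -/
theorem stmt_15
    {E : Type*} [MeasurableSpace E]
    (μ0 : Measure E) [IsProbabilityMeasure μ0]
    (h : E → ℝ) (hmeas : Measurable h) (hint : Integrable h μ0)
    (ν : Measure E) [IsProbabilityMeasure ν]
    (hexp0 : ∀ l : ℝ, 0 < l → Integrable (fun x => Real.exp (l * h x)) μ0)
    (hexp1 : ∀ l : ℝ, 0 < l → Integrable (fun x => Real.exp (-l * h x)) ν)
    (S : EReal)
    (hS : S = -(⨅ l₁ : {l : ℝ // 0 < l}, ⨅ l₂ : {l : ℝ // 0 < l},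
      ((l₂.1 / (l₁.1 + l₂.1) * Real.log (∫ x, Real.exp (l₁.1 * h x) ∂μ0)
        + l₁.1 / (l₁.1 + l₂.1) * Real.log (∫ x, Real.exp (-l₂.1 * h x) ∂ν) : ℝ) : EReal))) :
    ∀ b ∈ Set.Ioo (0:ℝ) 1, ∃ N : ℕ, ∀ n ≥ N,
      ENNReal.ofReal b * EReal.exp (-S)
        ≤ ⨅ γ : ℝ,
            (Measure.pi (fun _ : Fin n => μ0) {y | γ ≤ ∑ t, h (y t)}
              + Measure.pi (fun _ : Fin n => ν) {y | ∑ t, h (y t) < γ}) ^ ((n : ℝ)⁻¹) := by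
  
  intro b hb
  have hnegS : -S = (⨅ l₁ : {l : ℝ // 0 < l}, ⨅ l₂ : {l : ℝ // 0 < l},
      ((l₂.1 / (l₁.1 + l₂.1) * Real.log (∫ x, Real.exp (l₁.1 * h x) ∂μ0)
        + l₁.1 / (l₁.1 + l₂.1) * Real.log (∫ x, Real.exp (-l₂.1 * h x) ∂ν) : ℝ) : EReal)) := by
    rw [hS, neg_neg]
  rcases eq_or_ne (-S) ⊥ with hbot | hne
  · refine ⟨0, fun n _ => ?_⟩
    rw [hbot, EReal.exp_bot, mul_zero]
    exact zero_le
  · -- -S is a real number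
    have hne_top : -S ≠ ⊤ := by
      rw [hnegS]
      intro htop
      have hle : (⨅ l₁ : {l : ℝ // 0 < l}, ⨅ l₂ : {l : ℝ // 0 < l},
          ((l₂.1 / (l₁.1 + l₂.1) * Real.log (∫ x, Real.exp (l₁.1 * h x) ∂μ0)
            + l₁.1 / (l₁.1 + l₂.1) * Real.log (∫ x, Real.exp (-l₂.1 * h x) ∂ν) : ℝ) : EReal))
          ≤ (((1:ℝ) / ((1:ℝ)+(1:ℝ)) * Real.log (∫ x, Real.exp ((1:ℝ) * h x) ∂μ0)
            + (1:ℝ) / ((1:ℝ)+(1:ℝ)) * Real.log (∫ x, Real.exp (-(1:ℝ) * h x) ∂ν) : ℝ) : EReal) := by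
        refine le_trans (iInf_le _ (⟨1, one_pos⟩ : {l : ℝ // 0 < l})) (iInf_le _ (⟨1, one_pos⟩ : {l : ℝ // 0 < l}))
      rw [htop] at hle
      exact (EReal.coe_ne_top _) (top_le_iff.mp hle)
    lift -S to ℝ using ⟨hne_top, hne⟩ with mr hmr_eq
    -- extract the real infimum bound
    have hmr : ∀ l₁ l₂ : ℝ, 0 < l₁ → 0 < l₂ →
        mr ≤ l₂/(l₁+l₂) * Real.log (Stmt15x.Mgf μ0 h l₁)
          + l₁/(l₁+l₂) * Real.log (Stmt15x.Mgf ν (fun x => -h x) l₂) := by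
      intro l₁ l₂ hl₁ hl₂
      have hle : ((mr : EReal))
          ≤ ((l₂ / (l₁ + l₂) * Real.log (∫ x, Real.exp (l₁ * h x) ∂μ0)
            + l₁ / (l₁ + l₂) * Real.log (∫ x, Real.exp (-l₂ * h x) ∂ν) : ℝ) : EReal) := by
        rw [hnegS]
        exact le_trans (iInf_le _ (⟨l₁, hl₁⟩ : {l : ℝ // 0 < l})) (iInf_le _ (⟨l₂, hl₂⟩ : {l : ℝ // 0 < l}))
      have hle' := EReal.coe_le_coe_iff.mp hle
      have hint_eq : (∫ x, Real.exp (-l₂ * h x) ∂ν) = Stmt15x.Mgf ν (fun x => -h x) l₂ := by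
        rw [Stmt15x.Mgf]
        congr 1
        funext x
        congr 1
        ring
      rw [hint_eq] at hle'
      exact hle'
    have hexp1' : ∀ l : ℝ, 0 < l → Integrable (fun x => Real.exp (l * (-h x))) ν := by
      intro l hl
      have heq : (fun x => Real.exp (-l * h x)) = (fun x => Real.exp (l * (-h x))) := by
        funext x
        rw [neg_mul, mul_neg]
      rw [← heq]
      exact hexp1 l hl
    set ε : ℝ := -Real.log b with hε_def
    have hεpos : 0 < ε := by
      rw [hε_def, neg_pos]
      exact Real.log_neg hb.1 hb.2
    obtain ⟨N, hNpos, hmain⟩ := Stmt15v.two_sided μ0 ν h hmeas hexp0 hexp1' mr hmr hεpos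
    refine ⟨N, fun n hn => ?_⟩
    have hn0 : 0 < n := lt_of_lt_of_le hNpos hn
    have hn0R : (0:ℝ) < (n:ℝ) := by exact_mod_cast hn0
    -- rewrite the LHS
    have hLHS : ENNReal.ofReal b * EReal.exp ((mr : EReal)) = ENNReal.ofReal (Real.exp (mr - ε)) := by
      rw [EReal.exp_coe, ← ENNReal.ofReal_mul (le_of_lt hb.1)]
      congr 1
      rw [hε_def]
      rw [show mr - -Real.log b = Real.log b + mr by ring, Real.exp_add,
        Real.exp_log hb.1]
    rw [hLHS]
    refine le_iInf fun γ => ?_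
    have hkey := hmain n hn γ
    set x : ℝ≥0∞ := ENNReal.ofReal (Real.exp (mr - ε)) with hx
    have hxpow : x ^ (n:ℕ) = ENNReal.ofReal (Real.exp (n * (mr - ε))) := by
      rw [hx, ← ENNReal.ofReal_pow (Real.exp_nonneg _), ← Real.exp_nat_mul]
    calc x = (x ^ (n:ℕ)) ^ ((n:ℝ)⁻¹) := by
          rw [← ENNReal.rpow_natCast x n, ← ENNReal.rpow_mul,
            mul_inv_cancel₀ hn0R.ne', ENNReal.rpow_one]
      _ ≤ _ := by
          refine ENNReal.rpow_le_rpow ?_ (by positivity)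
          rw [hxpow]
          exact hkey
end

section
/- Let p = (p_1, …, p_m) be a probability vector (p_i ≥ 0, ∑ p_i = 1) with at least two nonzero entries, let U_1, …, U_m be i.i.d. Uniform(0,1), and let I = argmax_{i : p_i > 0} (log U_i)/p_i. Then the law of the pivotal statistic Y = U_I is absolutely continuous on [0,1] with density r ↦ ∑_{i : p_i > 0} r^{(1−p_i)/p_i}. In particular, for Δ ∈ (0,1), k = ⌊1/(1−Δ)⌋, Δ̃ = (1−Δ)k, and the least-favorable distribution p* = (1−Δ, …, 1−Δ, 1−(1−Δ)k, 0, …, 0) (with k coordinates equal to 1−Δ), the density of Y equals r ↦ k r^{Δ/(1−Δ)} + r^{Δ̃/(1−Δ̃)} = e^{h*_Δ(r)}, where h*_Δ is the optimal score function of the complete-inheritance problem and r^{Δ̃/(1−Δ̃)} is interpreted as 0 for r ∈ (0,1) when Δ̃ = 1. -/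
open MeasureTheory Filter Set ENNReal

/-- The density of the Gumbel-max pivotal statistic under complete inheritance:
`g_p(r) = ∑_{i : p_i > 0} r^{(1−p_i)/p_i}`. -/
noncomputable def gden (m : ℕ) (p : Fin m → ℝ) (r : ℝ) : ℝ :=
  ∑ i ∈ Finset.univ.filter (fun i => 0 < p i), r ^ ((1 - p i) / p i)

/-- The optimal score function `h*_Δ(r) = log( k r^{Δ/(1−Δ)} + r^{Δ̃/(1−Δ̃)} )` with
`k = ⌊1/(1−Δ)⌋`, `Δ̃ = (1−Δ)k`, and the convention `r^{Δ̃/(1−Δ̃)} = 0` on `(0,1)` when `Δ̃ = 1`. -/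
noncomputable def hstarC (Δ : ℝ) (r : ℝ) : ℝ :=
  Real.log ((⌊(1 - Δ)⁻¹⌋₊ : ℝ) * r ^ (Δ / (1 - Δ))
    + (if (1 - Δ) * ⌊(1 - Δ)⁻¹⌋₊ = 1 then 0
       else r ^ ((1 - Δ) * ⌊(1 - Δ)⁻¹⌋₊ / (1 - (1 - Δ) * ⌊(1 - Δ)⁻¹⌋₊))))

/-- The least-favorable distribution `p* = (1−Δ, …, 1−Δ, 1−(1−Δ)k, 0, …, 0)` with
`k = ⌊1/(1−Δ)⌋` coordinates equal to `1−Δ`. -/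
noncomputable def pstar (m : ℕ) (Δ : ℝ) : Fin m → ℝ :=
  fun i =>
    if (i : ℕ) < ⌊(1 - Δ)⁻¹⌋₊ then 1 - Δ
    else if (i : ℕ) = ⌊(1 - Δ)⁻¹⌋₊ then 1 - (1 - Δ) * ⌊(1 - Δ)⁻¹⌋₊
    else 0

/-- The key slice computation: the probability that the `argmax` index is `i` and the `i`-th
uniform falls in `A`, computed under the product of uniform distributions on `(0,1)`. -/
lemma sliceC {n : ℕ} (p : Fin (n+1) → ℝ) (hp : ∀ i, 0 ≤ p i) (hpsum : ∑ j, p j = 1)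
    (i : Fin (n+1)) (hpi : 0 < p i) {A : Set ℝ} (hA : MeasurableSet A) :
    (Measure.pi fun _ : Fin (n+1) => volume.restrict (Set.Ioo (0:ℝ) 1))
      {u : Fin (n+1) → ℝ | u i ∈ A ∧ ∀ j, 0 < p j → j ≠ i →
          Real.log (u j) / p j < Real.log (u i) / p i}
      = ∫⁻ x in A ∩ Set.Ioo (0:ℝ) 1, ENNReal.ofReal (x ^ ((1 - p i) / p i)) := by
  set ν := volume.restrict (Set.Ioo (0:ℝ) 1) with hν
  haveI : IsProbabilityMeasure ν := ⟨by simp [hν]⟩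
  set D : Set (Fin (n+1) → ℝ) := {u : Fin (n+1) → ℝ | u i ∈ A ∧ ∀ j, 0 < p j → j ≠ i →
          Real.log (u j) / p j < Real.log (u i) / p i} with hD
  set box : Set (Fin (n+1) → ℝ) := Set.pi Set.univ (fun _ => Set.Ioo (0:ℝ) 1) with hbox
  have hboxm : MeasurableSet box := MeasurableSet.univ_pi (fun _ => measurableSet_Ioo)
  have hboxc : (Measure.pi fun _ : Fin (n+1) => ν) boxᶜ = 0 := by
    rw [measure_compl hboxm (measure_ne_top _ _), hbox, Measure.pi_pi]
    simp [hν]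
  have h1 : (Measure.pi fun _ : Fin (n+1) => ν) D
      = (Measure.pi fun _ : Fin (n+1) => ν) (D ∩ box) := (measure_inter_conull hboxc).symm
  set e := MeasurableEquiv.piFinSuccAbove (fun _ : Fin (n+1) => ℝ) i with he
  set s : Set (ℝ × (Fin n → ℝ)) :=
    {q : ℝ × (Fin n → ℝ) | q.1 ∈ A ∩ Set.Ioo (0:ℝ) 1 ∧
      ∀ j, q.2 j ∈ Set.Ioo 0 (q.1 ^ (p (i.succAbove j) / p i))} with hs
  have key : ∀ (x z : ℝ) (j : Fin (n+1)), x ∈ Set.Ioo (0:ℝ) 1 → j ≠ i →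
      ((z ∈ Set.Ioo (0:ℝ) 1 ∧ (0 < p j → Real.log z / p j < Real.log x / p i))
        ↔ z ∈ Set.Ioo 0 (x ^ (p j / p i))) := by
    intro x z j hx hji
    rcases (hp j).eq_or_lt with h0 | h0
    · have hz0 : p j / p i = 0 := by rw [← h0]; simp
      rw [hz0, Real.rpow_zero]
      constructor
      · rintro ⟨hz, _⟩; exact hz
      · intro hz; exact ⟨hz, fun hc => absurd hc (by rw [← h0]; exact lt_irrefl 0)⟩
    · have hc : 0 < p j / p i := div_pos h0 hpi
      have hxc : (0:ℝ) < x ^ (p j / p i) := Real.rpow_pos_of_pos hx.1 _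
      have hxc1 : x ^ (p j / p i) ≤ 1 := Real.rpow_le_one hx.1.le hx.2.le hc.le
      constructor
      · rintro ⟨hz, hlog⟩
        refine ⟨hz.1, ?_⟩
        have := hlog h0
        rw [div_lt_iff₀ h0] at this
        have h2 : Real.log x / p i * p j = (p j / p i) * Real.log x := by ring
        rw [h2, ← Real.log_rpow hx.1] at this
        exact (Real.log_lt_log_iff hz.1 hxc).mp this
      · rintro ⟨hz0, hz1⟩
        have hlt : Real.log z < Real.log (x ^ (p j / p i)) :=
          (Real.log_lt_log_iff hz0 hxc).mpr hz1
        rw [Real.log_rpow hx.1] at hlt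
        refine ⟨⟨hz0, lt_of_lt_of_le hz1 hxc1⟩, fun _ => ?_⟩
        rw [div_lt_div_iff₀ h0 hpi]
        calc Real.log z * p i < (p j / p i * Real.log x) * p i :=
          mul_lt_mul_of_pos_right hlt hpi
        _ = Real.log x * p j := by field_simp
  have h2 : D ∩ box = e ⁻¹' s := by
    ext u
    have happ : e u = (u i, fun j => u (i.succAbove j)) := rfl
    simp only [Set.mem_inter_iff, hD, Set.mem_setOf_eq, hbox, Set.mem_pi, Set.mem_univ,
      forall_true_left, Set.mem_preimage, happ, hs]
    constructor
    · rintro ⟨⟨huA, hlog⟩, hb⟩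
      refine ⟨⟨huA, hb i⟩, fun j => ?_⟩
      exact (key (u i) (u (i.succAbove j)) (i.succAbove j) (hb i) (Fin.succAbove_ne i j)).mp
        ⟨hb _, fun hpj => hlog _ hpj (Fin.succAbove_ne i j)⟩
    · rintro ⟨⟨huA, hui⟩, hall⟩
      have hb : ∀ j, u j ∈ Set.Ioo (0:ℝ) 1 := by
        intro j
        by_cases hj : j = i
        · subst hj; exact hui
        · obtain ⟨j', rfl⟩ := Fin.exists_succAbove_eq (Ne.symm (Ne.symm hj))
          exact ((key (u i) _ _ hui hj).mpr (hall j')).1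
      refine ⟨⟨huA, fun j hpj hj => ?_⟩, hb⟩
      obtain ⟨j', rfl⟩ := Fin.exists_succAbove_eq hj
      exact ((key (u i) _ _ hui hj).mpr (hall j')).2 hpj
  have hsm : MeasurableSet s := by
    have h1 : MeasurableSet {q : ℝ × (Fin n → ℝ) | q.1 ∈ A ∩ Set.Ioo (0:ℝ) 1} :=
      measurable_fst (hA.inter measurableSet_Ioo)
    have h2 : ∀ j : Fin n, MeasurableSet
        {q : ℝ × (Fin n → ℝ) | q.2 j ∈ Set.Ioo 0 (q.1 ^ (p (i.succAbove j) / p i))} := by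
      intro j
      have hm2 : Measurable fun q : ℝ × (Fin n → ℝ) => q.2 j :=
        (measurable_pi_apply j).comp measurable_snd
      have hm1 : Measurable fun q : ℝ × (Fin n → ℝ) => q.1 ^ (p (i.succAbove j) / p i) :=
        measurable_fst.pow measurable_const
      exact (measurableSet_lt measurable_const hm2).inter (measurableSet_lt hm2 hm1)
    have : s = {q : ℝ × (Fin n → ℝ) | q.1 ∈ A ∩ Set.Ioo (0:ℝ) 1} ∩
        ⋂ j, {q : ℝ × (Fin n → ℝ) | q.2 j ∈ Set.Ioo 0 (q.1 ^ (p (i.succAbove j) / p i))} := by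
      ext q; simp [hs, Set.mem_iInter, Set.mem_Ioo, forall_and]
    rw [this]
    exact h1.inter (MeasurableSet.iInter h2)
  have h3 : (Measure.pi fun _ : Fin (n+1) => ν) (e ⁻¹' s)
      = (ν.prod (Measure.pi fun _ : Fin n => ν)) s :=
    (measurePreserving_piFinSuccAbove (fun _ : Fin (n+1) => ν) i).measure_preimage
      hsm.nullMeasurableSet
  have hslice : ∀ x : ℝ, (Measure.pi fun _ : Fin n => ν) (Prod.mk x ⁻¹' s)
      = (A ∩ Set.Ioo (0:ℝ) 1).indicator
          (fun x => ENNReal.ofReal (x ^ ((1 - p i) / p i))) x := by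
    intro x
    by_cases hx : x ∈ A ∩ Set.Ioo (0:ℝ) 1
    · have hpre : Prod.mk x ⁻¹' s
          = Set.pi Set.univ (fun j : Fin n => Set.Ioo 0 (x ^ (p (i.succAbove j) / p i))) := by
        obtain ⟨hxA, hx0, hx1⟩ := hx
        ext v; simp [hs, Set.mem_pi, hxA, hx0, hx1]
      rw [hpre, Measure.pi_pi, Set.indicator_of_mem hx]
      have hν1 : ∀ j : Fin n, ν (Set.Ioo 0 (x ^ (p (i.succAbove j) / p i)))
          = ENNReal.ofReal (x ^ (p (i.succAbove j) / p i)) := by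
        intro j
        have hle : x ^ (p (i.succAbove j) / p i) ≤ 1 :=
          Real.rpow_le_one hx.2.1.le hx.2.2.le (div_nonneg (hp _) hpi.le)
        rw [hν, Measure.restrict_apply measurableSet_Ioo,
          Set.inter_eq_left.mpr (Set.Ioo_subset_Ioo le_rfl hle), Real.volume_Ioo, sub_zero]
      simp_rw [hν1]
      rw [← ENNReal.ofReal_prod_of_nonneg (fun j _ => Real.rpow_nonneg hx.2.1.le _),
        ← Real.rpow_sum_of_pos hx.2.1]
      congr 2
      rw [← Finset.sum_div]
      congr 1
      have := Fin.sum_univ_succAbove p i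
      rw [hpsum] at this
      linarith
    · have hpre : Prod.mk x ⁻¹' s = ∅ :=
        Set.eq_empty_iff_forall_notMem.mpr fun v hv => hx hv.1
      rw [hpre, Set.indicator_of_notMem hx]
      simp
  rw [h1, h2, h3, Measure.prod_apply hsm]
  simp_rw [hslice]
  rw [lintegral_indicator (hA.inter measurableSet_Ioo), hν,
    Measure.restrict_restrict (hA.inter measurableSet_Ioo), Set.inter_assoc, Set.inter_self]

/-- Algebraic evaluation of the density `gden` at the least-favorable distribution. -/
lemma part2C (m : ℕ) (Δ : ℝ) (hΔ : Δ ∈ Set.Ioo (0:ℝ) 1)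
    (hpsum : ∑ i, pstar m Δ i = 1) (r : ℝ) (hr : r ∈ Set.Ioo (0:ℝ) 1) :
    gden m (pstar m Δ) r
      = (⌊(1 - Δ)⁻¹⌋₊ : ℝ) * r ^ (Δ / (1 - Δ))
        + (if (1 - Δ) * ⌊(1 - Δ)⁻¹⌋₊ = 1 then 0
           else r ^ ((1 - Δ) * ⌊(1 - Δ)⁻¹⌋₊ / (1 - (1 - Δ) * ⌊(1 - Δ)⁻¹⌋₊))) := by
  obtain ⟨hr0, hr1⟩ := hr
  obtain ⟨hΔ0, hΔ1⟩ := hΔ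
  obtain ⟨k, hkdef⟩ : ∃ k : ℕ, k = ⌊(1 - Δ)⁻¹⌋₊ := ⟨_, rfl⟩
  rw [← hkdef]
  obtain ⟨δ, hδdef⟩ : ∃ δ : ℝ, δ = 1 - Δ := ⟨_, rfl⟩
  rw [← hδdef]
  have hδ0 : 0 < δ := by rw [hδdef]; linarith
  have hδ1 : δ < 1 := by rw [hδdef]; linarith
  have hδi : δ * δ⁻¹ = 1 := mul_inv_cancel₀ hδ0.ne'
  have hinv1 : (1:ℝ) ≤ δ⁻¹ := by nlinarith [hδi, inv_nonneg.mpr hδ0.le]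
  have hk1 : 1 ≤ k := by rw [hkdef, hδdef] at *; exact Nat.le_floor (by exact_mod_cast hinv1)
  have hkle : (k:ℝ) ≤ δ⁻¹ := by
    rw [hkdef, hδdef] at *; exact Nat.floor_le (by positivity)
  have hΔtle : δ * k ≤ 1 := by nlinarith [hkle, hδ0]
  have hsum_filter : gden m (pstar m Δ) r
      = ∑ i : Fin m, (if 0 < pstar m Δ i then r ^ ((1 - pstar m Δ i) / pstar m Δ i) else 0) := by
    rw [gden, Finset.sum_filter]
  by_cases hkm : k < m
  · have hfun : ∀ i : Fin m,
        (if 0 < pstar m Δ i then r ^ ((1 - pstar m Δ i) / pstar m Δ i) else 0)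
        = (if (i:ℕ) < k then r ^ (Δ / δ) else 0)
          + (if (i:ℕ) = k then
              (if δ * k = 1 then 0 else r ^ (δ * k / (1 - δ * k))) else 0) := by
      intro i
      rcases lt_trichotomy (i:ℕ) k with h | h | h
      · have hps : pstar m Δ i = δ := by
          rw [pstar, ← hkdef, ← hδdef, if_pos h]
        rw [hps, if_pos hδ0, if_pos h, if_neg (by omega), add_zero]
        congr 1
        rw [hδdef]; ring
      · have hps : pstar m Δ i = 1 - δ * k := by
          rw [pstar, ← hkdef, ← hδdef, if_neg (by omega), if_pos h]
        rw [hps, if_neg (show ¬ (i:ℕ) < k by omega), if_pos h, zero_add]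
        by_cases h1 : δ * k = 1
        · rw [if_pos h1, if_neg (by rw [h1]; simp)]
        · have hlt : δ * k < 1 := lt_of_le_of_ne hΔtle h1
          rw [if_neg h1, if_pos (by linarith)]
          congr 1
          ring
      · have hps : pstar m Δ i = 0 := by
          rw [pstar, ← hkdef, if_neg (by omega), if_neg (by omega)]
        rw [hps, if_neg (lt_irrefl 0), if_neg (by omega), if_neg (by omega), add_zero]
    rw [hsum_filter, Finset.sum_congr rfl (fun i _ => hfun i), Finset.sum_add_distrib]
    congr 1
    · rw [Fin.sum_univ_eq_sum_range (fun j => if j < k then r ^ (Δ / δ) else 0) m]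
      have hcong : ∀ j ∈ Finset.range m,
          (if j < k then r ^ (Δ / δ) else 0)
          = if j ∈ Finset.range k then r ^ (Δ / δ) else 0 := by
        intro j _; simp [Finset.mem_range]
      rw [Finset.sum_congr rfl hcong, Finset.sum_ite_mem,
        Finset.inter_eq_right.mpr (Finset.range_subset_range.mpr hkm.le),
        Finset.sum_const, Finset.card_range, nsmul_eq_mul]
    · rw [Fin.sum_univ_eq_sum_range
        (fun j => if j = k then (if δ * k = 1 then 0 else r ^ (δ * k / (1 - δ * k))) else 0) m,
        Finset.sum_ite_eq' (Finset.range m) k, if_pos (Finset.mem_range.mpr hkm)]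
  · have hall : ∀ i : Fin m, pstar m Δ i = δ := by
      intro i
      rw [pstar, ← hkdef, ← hδdef, if_pos (lt_of_lt_of_le i.isLt (not_lt.mp hkm))]
    have hsum : (m:ℝ) * δ = 1 := by
      rw [← hpsum, Finset.sum_congr rfl (fun i _ => hall i), Finset.sum_const,
        Finset.card_univ, Fintype.card_fin, nsmul_eq_mul]
    have hminv : δ⁻¹ = (m:ℝ) := inv_eq_of_mul_eq_one_left hsum
    have hk : k = m := by
      rw [hkdef, hδdef] at *; rw [hminv, Nat.floor_natCast] at hkdef ⊢
    have hif : δ * k = 1 := by rw [hk]; linarith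
    rw [if_pos hif, add_zero, hsum_filter,
      Finset.sum_congr rfl (fun i (_ : i ∈ Finset.univ) => by
        rw [hall i, if_pos hδ0, (by rw [hδdef]; ring : (1 - δ) / δ = Δ / δ)]),
      Finset.sum_const, Finset.card_univ, Fintype.card_fin, nsmul_eq_mul, hk]

/-- Let `p` be a probability vector with at least two nonzero entries,
`U_1, …, U_m` i.i.d. `Uniform(0,1)`, and `I = argmax_{i : p_i > 0} (log U_i)/p_i`. Then the law
of the pivotal statistic `Y = U_I` is absolutely continuous on `[0,1]` with density
`r ↦ ∑_{i : p_i > 0} r^{(1−p_i)/p_i}`. In particular, for the least-favorable distribution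
`p* = pstar m Δ` the density equals `r ↦ k r^{Δ/(1−Δ)} + r^{Δ̃/(1−Δ̃)} = e^{h*_Δ(r)}`. -/
theorem stmt_18
    {Ω : Type*} [MeasurableSpace Ω] (μ : Measure Ω) [IsProbabilityMeasure μ]
    (m : ℕ) (p : Fin m → ℝ) (hp : ∀ i, 0 ≤ p i) (hpsum : ∑ i, p i = 1)
    (htwo : 2 ≤ (Finset.univ.filter (fun i => 0 < p i)).card)
    (U : Fin m → Ω → ℝ) (hUmeas : ∀ i, Measurable (U i))
    (hUlaw : Measure.map (fun ω i => U i ω) μ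
      = Measure.pi fun _ : Fin m => volume.restrict (Set.Ioo (0:ℝ) 1))
    (I : Ω → Fin m) (hImeas : Measurable I)
    (hI : ∀ᵐ ω ∂μ, 0 < p (I ω) ∧ ∀ j, 0 < p j → j ≠ I ω →
      Real.log (U j ω) / p j < Real.log (U (I ω) ω) / p (I ω)) :
    Measure.map (fun ω => U (I ω) ω) μ
      = (volume.restrict (Set.Icc (0:ℝ) 1)).withDensity
          (fun r => ENNReal.ofReal (gden m p r))
    ∧ ∀ Δ ∈ Set.Ioo (0:ℝ) 1, p = pstar m Δ →
        ∀ r ∈ Set.Ioo (0:ℝ) 1,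
          gden m p r
            = (⌊(1 - Δ)⁻¹⌋₊ : ℝ) * r ^ (Δ / (1 - Δ))
                + (if (1 - Δ) * ⌊(1 - Δ)⁻¹⌋₊ = 1 then 0
                   else r ^ ((1 - Δ) * ⌊(1 - Δ)⁻¹⌋₊
                     / (1 - (1 - Δ) * ⌊(1 - Δ)⁻¹⌋₊)))
          ∧ gden m p r = Real.exp (hstarC Δ r) := by
  have hm : m ≠ 0 := by
    intro h
    subst h
    simp [Finset.univ_eq_empty] at htwo
  obtain ⟨n, rfl⟩ : ∃ n, m = n + 1 := ⟨m - 1, by omega⟩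
  constructor
  · -- the law of the pivotal statistic
    have hW : Measurable fun ω => (fun j => U j ω) := measurable_pi_lambda _ hUmeas
    have hYmeas : Measurable fun ω => U (I ω) ω := by
      have heq : (fun ω => U (I ω) ω)
          = (fun q : (Fin (n+1) → ℝ) × Fin (n+1) => q.1 q.2)
            ∘ fun ω => ((fun j => U j ω), I ω) := rfl
      rw [heq]
      exact (measurable_from_prod_countable_left fun i => measurable_pi_apply i).comp
        (hW.prodMk hImeas)
    refine Measure.ext fun A hA => ?_
    rw [Measure.map_apply hYmeas hA, withDensity_apply _ hA, Measure.restrict_restrict hA]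
    have hdecomp : (fun ω => U (I ω) ω) ⁻¹' A = ⋃ i, ((I ⁻¹' {i}) ∩ U i ⁻¹' A) := by
      ext ω
      simp only [Set.mem_preimage, Set.mem_iUnion, Set.mem_inter_iff, Set.mem_singleton_iff]
      constructor
      · intro h; exact ⟨I ω, rfl, h⟩
      · rintro ⟨i, hi, h⟩; rw [hi]; exact h
    have hdisj : Pairwise (Function.onFun Disjoint fun i => (I ⁻¹' {i}) ∩ U i ⁻¹' A) := by
      intro i j hij
      refine Set.disjoint_left.mpr ?_
      rintro ω ⟨h1, _⟩ ⟨h2, _⟩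
      exact hij ((Set.mem_singleton_iff.mp h1).symm.trans (Set.mem_singleton_iff.mp h2))
    rw [hdecomp, measure_iUnion hdisj
      (fun i => (hImeas (measurableSet_singleton i)).inter ((hUmeas i) hA)), tsum_fintype]
    have hnull : μ {ω | ¬ (0 < p (I ω) ∧ ∀ j, 0 < p j → j ≠ I ω →
        Real.log (U j ω) / p j < Real.log (U (I ω) ω) / p (I ω))} = 0 := ae_iff.mp hI
    have hzero : ∀ i : Fin (n+1), ¬ 0 < p i → μ ((I ⁻¹' {i}) ∩ U i ⁻¹' A) = 0 := by
      intro i hpi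
      refine measure_mono_null ?_ hnull
      rintro ω ⟨h1, _⟩
      simp only [Set.mem_setOf_eq]
      intro hcon
      exact hpi (by rw [← Set.mem_singleton_iff.mp h1]; exact hcon.1)
    have hpos : ∀ i : Fin (n+1), 0 < p i →
        μ ((I ⁻¹' {i}) ∩ U i ⁻¹' A)
        = ∫⁻ x in A ∩ Set.Ioo (0:ℝ) 1, ENNReal.ofReal (x ^ ((1 - p i) / p i)) := by
      intro i hpi
      have hDmeas : MeasurableSet {u : Fin (n+1) → ℝ | u i ∈ A ∧ ∀ j, 0 < p j → j ≠ i →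
          Real.log (u j) / p j < Real.log (u i) / p i} := by
        have hrw : {u : Fin (n+1) → ℝ | u i ∈ A ∧ ∀ j, 0 < p j → j ≠ i →
            Real.log (u j) / p j < Real.log (u i) / p i}
            = ((fun u : Fin (n+1) → ℝ => u i) ⁻¹' A) ∩
              ⋂ j, {u : Fin (n+1) → ℝ | 0 < p j → j ≠ i →
                Real.log (u j) / p j < Real.log (u i) / p i} := by
          ext u; simp [Set.mem_iInter]
        rw [hrw]
        refine ((measurable_pi_apply i) hA).inter (MeasurableSet.iInter fun j => ?_)
        by_cases h1 : 0 < p j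
        · by_cases h2 : j ≠ i
          · have he : {u : Fin (n+1) → ℝ | 0 < p j → j ≠ i →
                Real.log (u j) / p j < Real.log (u i) / p i}
                = {u : Fin (n+1) → ℝ | Real.log (u j) / p j < Real.log (u i) / p i} := by
              ext u; simp [h1, h2]
            rw [he]
            exact measurableSet_lt
              ((Real.measurable_log.comp (measurable_pi_apply j)).div_const _)
              ((Real.measurable_log.comp (measurable_pi_apply i)).div_const _)
          · have he : {u : Fin (n+1) → ℝ | 0 < p j → j ≠ i →
                Real.log (u j) / p j < Real.log (u i) / p i} = Set.univ := by
              ext u; simp [h2]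
            rw [he]; exact MeasurableSet.univ
        · have he : {u : Fin (n+1) → ℝ | 0 < p j → j ≠ i →
              Real.log (u j) / p j < Real.log (u i) / p i} = Set.univ := by
            ext u; simp [h1]
          rw [he]; exact MeasurableSet.univ
      have hae : (((I ⁻¹' {i}) ∩ U i ⁻¹' A : Set Ω))
          =ᵐ[μ] ((fun ω => (fun j => U j ω)) ⁻¹'
            {u : Fin (n+1) → ℝ | u i ∈ A ∧ ∀ j, 0 < p j → j ≠ i →
              Real.log (u j) / p j < Real.log (u i) / p i}) := by
        refine Filter.eventuallyEq_set.mpr ?_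
        filter_upwards [hI] with ω hω
        simp only [Set.mem_inter_iff, Set.mem_preimage, Set.mem_singleton_iff, Set.mem_setOf_eq]
        constructor
        · rintro ⟨hIi, hUA⟩
          refine ⟨hUA, fun j hpj hj => ?_⟩
          have := hω.2 j hpj (by rw [hIi]; exact hj)
          rw [hIi] at this
          exact this
        · rintro ⟨hUA, hlt⟩
          have hIi : I ω = i := by
            by_contra hne
            exact lt_asymm (hω.2 i hpi fun h => hne h.symm)
              (hlt (I ω) hω.1 fun h => hne h)
          exact ⟨hIi, hUA⟩
      rw [measure_congr hae, ← Measure.map_apply hW hDmeas, hUlaw]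
      exact sliceC p hp hpsum i hpi hA
    rw [← Finset.sum_filter_add_sum_filter_not Finset.univ (fun i => 0 < p i)
      (fun i => μ ((I ⁻¹' {i}) ∩ U i ⁻¹' A))]
    rw [Finset.sum_eq_zero (fun i hi => hzero i (Finset.mem_filter.mp hi).2), add_zero]
    rw [Finset.sum_congr rfl (fun i hi => hpos i (Finset.mem_filter.mp hi).2)]
    have hIccIoo : (A ∩ Set.Icc (0:ℝ) 1 : Set ℝ) =ᵐ[volume] (A ∩ Set.Ioo (0:ℝ) 1 : Set ℝ) :=
      ae_eq_set_inter (Filter.EventuallyEq.refl _ _) Ioo_ae_eq_Icc.symm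
    rw [setLIntegral_congr hIccIoo]
    have hgden : ∀ x, x ∈ A ∩ Set.Ioo (0:ℝ) 1 →
        ENNReal.ofReal (gden (n+1) p x)
        = ∑ i ∈ Finset.univ.filter (fun i => 0 < p i),
            ENNReal.ofReal (x ^ ((1 - p i) / p i)) := by
      intro x hx
      rw [gden, ENNReal.ofReal_sum_of_nonneg (fun i _ => Real.rpow_nonneg hx.2.1.le _)]
    rw [setLIntegral_congr_fun (hA.inter measurableSet_Ioo) hgden]
    rw [lintegral_finset_sum _
      (fun i _ => (measurable_id'.pow measurable_const).ennreal_ofReal)]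
  · -- the least-favorable evaluation
    intro Δ hΔ hpp r hr
    have hpsum' : ∑ i, pstar (n+1) Δ i = 1 := by rw [← hpp]; exact hpsum
    have h1 := part2C (n+1) Δ hΔ hpsum' r hr
    rw [hpp]
    refine ⟨h1, ?_⟩
    have hΔ0 := hΔ.1
    have hΔ1 := hΔ.2
    have hδ0 : (0:ℝ) < 1 - Δ := by linarith
    have hδi : (1 - Δ) * (1 - Δ)⁻¹ = 1 := mul_inv_cancel₀ hδ0.ne'
    have hinv1 : (1:ℝ) ≤ (1 - Δ)⁻¹ := by nlinarith [hδi, inv_nonneg.mpr hδ0.le]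
    have hk1 : 1 ≤ ⌊(1 - Δ)⁻¹⌋₊ := Nat.le_floor (by exact_mod_cast hinv1)
    have hE : 0 < (⌊(1 - Δ)⁻¹⌋₊ : ℝ) * r ^ (Δ / (1 - Δ))
        + (if (1 - Δ) * ⌊(1 - Δ)⁻¹⌋₊ = 1 then 0
           else r ^ ((1 - Δ) * ⌊(1 - Δ)⁻¹⌋₊ / (1 - (1 - Δ) * ⌊(1 - Δ)⁻¹⌋₊))) := by
      have hpos : 0 < (⌊(1 - Δ)⁻¹⌋₊ : ℝ) * r ^ (Δ / (1 - Δ)) :=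
        mul_pos (by exact_mod_cast hk1) (Real.rpow_pos_of_pos hr.1 _)
      have hnn : 0 ≤ (if (1 - Δ) * ⌊(1 - Δ)⁻¹⌋₊ = 1 then (0:ℝ)
          else r ^ ((1 - Δ) * ⌊(1 - Δ)⁻¹⌋₊ / (1 - (1 - Δ) * ⌊(1 - Δ)⁻¹⌋₊))) := by
        split
        · exact le_refl 0
        · exact (Real.rpow_pos_of_pos hr.1 _).le
      linarith
    rw [hstarC, Real.exp_log hE]
    exact h1
end
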